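/- arXiv:2308.09352 — 2 statements merged into one kernel-verified Lean document; each statement's English description precedes it below -/
import Mathlib

section
/- Let n ≥ 1 and let X be an infinite subshift of symbolic rank ≤ n. Suppose X = X_V where V has a proper rank-n construction. Then (X, σ) is an essentially minimal Cantor system. In particular, there is k ∈ ℕ such that 0^k is not a subword of V. -/
namespace SubshiftRank

/-! ### Words over the alphabet {0,1}; `false` plays the role of `0`, `true` of `1`. -/

abbrev Word := List Bool

/-- `ℱ`: the set of finite nonempty words over `{0,1}` beginning and ending with `0`. -/
def FF : Set Word := {w | w ≠ [] ∧ w.head? = some false ∧ w.getLast? = some false}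

/-- `spacer s = 1^s`. -/
def spacer (s : ℕ) : Word := List.replicate s true

/-- A building: a sequence of words `v₁, …, v_k` with spacers `s₁, …, s_k` (the `pairs`),
followed by a final word `v_{k+1}` (the `last`).  The assembled word is
`v₁1^{s₁}v₂1^{s₂}⋯v_k1^{s_k}v_{k+1}`. -/
structure Building where
  pairs : List (Word × ℕ)
  last : Word

/-- The word assembled by a building. -/
def Building.word (b : Building) : Word :=
  b.pairs.foldr (fun p acc => p.1 ++ spacer p.2 ++ acc) b.last

/-- The words `v₁, …, v_{k+1}` used in a building (in order). -/
def Building.pieces (b : Building) : List Word := b.pairs.map Prod.fst ++ [b.last]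

/-- `b` is a building from the set `S`: there is at least one spacer (i.e. `k ≥ 1`, at least
two pieces) and all the pieces belong to `S`. -/
def Building.FromSet (b : Building) (S : Set Word) : Prop :=
  b.pairs ≠ [] ∧ ∀ v ∈ b.pieces, v ∈ S

/-- The first word of a building. -/
def Building.firstPiece (b : Building) : Word := b.pieces.headI

/-- Every word of `S` is used in the building. -/
def Building.UsesAll (b : Building) (S : Set Word) : Prop := ∀ v ∈ S, v ∈ b.pieces

/-- The spacer parameter of the building is bounded by `M`. -/
def Building.SpacersLE (b : Building) (M : ℕ) : Prop := ∀ p ∈ b.pairs, p.2 ≤ M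

/-- `w` is built from `S`. -/
def BuiltFrom (w : Word) (S : Set Word) : Prop := ∃ b : Building, b.FromSet S ∧ b.word = w

/-- The `i`-th level `S_i = {v_{i,1}, …, v_{i,n_i}}` of a generating sequence. -/
def levelSet (ni : ℕ → ℕ) (wd : ℕ → ℕ → Word) (i : ℕ) : Set Word :=
  {w | ∃ j, 1 ≤ j ∧ j ≤ ni i ∧ wd i j = w}

/-- A (symbolic) rank-`n` construction: a rank-`n` generating sequence `v_{i,j}`
(`i ≥ 0`, `1 ≤ j ≤ n_i ≤ n`) together with, for each `i` and `1 ≤ j ≤ n_{i+1}`, one chosen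
building of `v_{i+1,j}` from `S_i`, the building of `v_{i+1,1}` starting with `v_{i,1}`. -/
structure RankConstruction (n : ℕ) where
  ni : ℕ → ℕ
  wd : ℕ → ℕ → Word
  bld : ℕ → ℕ → Building
  ni_pos : ∀ i, 1 ≤ ni i
  ni_le : ∀ i, ni i ≤ n
  mem_FF : ∀ i j, 1 ≤ j → j ≤ ni i → wd i j ∈ FF
  wd_zero : ∀ j, 1 ≤ j → j ≤ ni 0 → wd 0 j = [false]
  bld_from : ∀ i j, 1 ≤ j → j ≤ ni (i + 1) → (bld i j).FromSet (levelSet ni wd i)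
  bld_word : ∀ i j, 1 ≤ j → j ≤ ni (i + 1) → (bld i j).word = wd (i + 1) j
  bld_start : ∀ i, (bld i 1).firstPiece = wd i 1

/-- A rank-`n` construction is proper if `n_i = n` for all `i` and every word of `S_i` is used
in each chosen building. -/
def RankConstruction.Proper {n : ℕ} (c : RankConstruction n) : Prop :=
  (∀ i, c.ni i = n) ∧
    ∀ i j, 1 ≤ j → j ≤ c.ni (i + 1) → (c.bld i j).UsesAll (levelSet c.ni c.wd i)

/-- All spacer parameters of all chosen buildings are bounded by `M`. -/
def RankConstruction.SpacersBoundedBy {n : ℕ} (c : RankConstruction n) (M : ℕ) : Prop :=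
  ∀ i j, 1 ≤ j → j ≤ c.ni (i + 1) → (c.bld i j).SpacersLE M

/-- The spacer parameter of the construction is bounded. -/
def RankConstruction.BoundedSpacer {n : ℕ} (c : RankConstruction n) : Prop :=
  ∃ M, c.SpacersBoundedBy M

/-- `w` is of the form `α1^{s₁}v_{j₁}1^{s₂}v_{j₂}⋯v_{j_{k−1}}1^{s_k}β` where `k ≥ 1`, the
middle words belong to `S`, `α` is a nonempty suffix of a word of `S` and `β` is a nonempty
prefix of a word of `S`. -/
def BadDecomp (w : Word) (S : Set Word) : Prop :=
  ∃ (α β : Word) (mids : List (ℕ × Word)) (sk : ℕ),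
    α ≠ [] ∧ β ≠ [] ∧ (∃ a ∈ S, α <:+ a) ∧ (∃ b ∈ S, β <+: b) ∧
    (∀ p ∈ mids, p.2 ∈ S) ∧
    w = α ++ mids.foldr (fun p acc => spacer p.1 ++ p.2 ++ acc) (spacer sk ++ β)

/-- A rank-`n` construction is good if it is proper and no `v_{i,j}` has a bad decomposition
over `S_i`. -/
def RankConstruction.Good {n : ℕ} (c : RankConstruction n) : Prop :=
  c.Proper ∧ ∀ i j, 1 ≤ j → j ≤ c.ni i → ¬ BadDecomp (c.wd i j) (levelSet c.ni c.wd i)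

/-- The finite word `w` is a prefix (initial segment) of the infinite word `V`. -/
def InfExtends (V : ℕ → Bool) (w : Word) : Prop := ∀ k, k < w.length → w.getD k false = V k

/-- `V = lim_i v_{i,1}` is the infinite word determined by the construction. -/
def RankConstruction.HasLimit {n : ℕ} (c : RankConstruction n) (V : ℕ → Bool) : Prop :=
  (∀ i, InfExtends V (c.wd i 1)) ∧ ∀ m : ℕ, ∃ i, m ≤ (c.wd i 1).length

/-- The infinite word `V` has a rank-`n` construction. -/
def HasRankConstr (V : ℕ → Bool) (n : ℕ) : Prop := ∃ c : RankConstruction n, c.HasLimit V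

/-! ### Occurrences and subshifts -/

/-- The finite word `u` occurs in the infinite word `V` at position `p`. -/
def OccursAtInf (u : Word) (V : ℕ → Bool) (p : ℕ) : Prop :=
  ∀ k, k < u.length → u.getD k false = V (p + k)

/-- `u` is a subword of the infinite word `V`. -/
def OccursInInf (u : Word) (V : ℕ → Bool) : Prop := ∃ p, OccursAtInf u V p

/-- The finite word `u` occurs in the bi-infinite word `x` at position `p`. -/
def OccursAtBi (u : Word) (x : ℤ → Bool) (p : ℤ) : Prop :=
  ∀ k : ℕ, k < u.length → u.getD k false = x (p + (k : ℤ))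

/-- `u` is a subword of the bi-infinite word `x`. -/
def OccursInBi (u : Word) (x : ℤ → Bool) : Prop := ∃ p, OccursAtBi u x p

/-- The Bernoulli shift `σ` on `{0,1}^ℤ`. -/
def shift (x : ℤ → Bool) : ℤ → Bool := fun k => x (k + 1)

/-- The subshift generated by the infinite word `V`. -/
def XV (V : ℕ → Bool) : Set (ℤ → Bool) := {x | ∀ u : Word, OccursInBi u x → OccursInInf u V}

/-- The `σ`-orbit of `x`. -/
def sorbit (x : ℤ → Bool) : Set (ℤ → Bool) := Set.range fun n : ℤ => fun k => x (k + n)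

/-- A subshift: a nonempty closed shift-invariant subset of `{0,1}^ℤ`. -/
def IsSubshift (X : Set (ℤ → Bool)) : Prop := X.Nonempty ∧ IsClosed X ∧ shift '' X = X

/-- A minimal subshift: every orbit is dense. -/
def MinimalSubshift (X : Set (ℤ → Bool)) : Prop :=
  IsSubshift X ∧ ∀ x ∈ X, X ⊆ closure (sorbit x)

/-- `X` has symbolic rank at most `n`. -/
def SymbRankLE (X : Set (ℤ → Bool)) (n : ℕ) : Prop := ∃ V, HasRankConstr V n ∧ X = XV V

/-- `X` has symbolic rank exactly `n`. -/
def SymbRankEq (X : Set (ℤ → Bool)) (n : ℕ) : Prop :=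
  SymbRankLE X n ∧ ∀ m, SymbRankLE X m → n ≤ m

/-- `M` is a minimal subset of the system `(X, shift)`: a nonempty closed shift-invariant
subset of `X` with no proper nonempty closed shift-invariant subset. -/
def IsMinimalSubsetOf (X M : Set (ℤ → Bool)) : Prop :=
  M.Nonempty ∧ IsClosed M ∧ M ⊆ X ∧ shift '' M = M ∧
    ∀ M', M' ⊆ M → M'.Nonempty → IsClosed M' → shift '' M' = M' → M' = M

/-- A bi-infinite word `x` is built from `v`: there is a strictly increasing bi-infinite
sequence of positions, with consecutive gaps at least `|v|` and unbounded in both directions,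
at each of which `v` occurs, and `x` equals `1` outside those occurrences. -/
def BiBuiltFrom (x : ℤ → Bool) (v : Word) : Prop :=
  ∃ pos : ℤ → ℤ, StrictMono pos ∧
    (∀ i : ℤ, pos i + (v.length : ℤ) ≤ pos (i + 1)) ∧
    (∀ n : ℤ, ∃ i : ℤ, n < pos i) ∧ (∀ n : ℤ, ∃ i : ℤ, pos i < n) ∧
    (∀ i : ℤ, OccursAtBi v x (pos i)) ∧
    (∀ p : ℤ, (∀ i : ℤ, ¬ (pos i ≤ p ∧ p < pos i + (v.length : ℤ))) → x p = true)

/-! ### General topological dynamics on (Cantor) metric spaces -/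

/-- Every orbit of `T` is dense. -/
def MinimalHomeo {X : Type*} [TopologicalSpace X] (T : X ≃ₜ X) : Prop :=
  ∀ x : X, Dense (Set.range fun n : ℤ => (T.toEquiv ^ n) x)

/-- The system `(X, T)` is equicontinuous. -/
def EquicontinuousSys {X : Type*} [MetricSpace X] (T : X ≃ₜ X) : Prop :=
  ∀ ε : ℝ, 0 < ε → ∃ δ : ℝ, 0 < δ ∧
    ∀ (n : ℤ) (x y : X), dist x y < δ → dist ((T.toEquiv ^ n) x) ((T.toEquiv ^ n) y) < ε

/-- `M` is a minimal set of `(X, T)`. -/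
def IsMinimalSet {X : Type*} [TopologicalSpace X] (T : X → X) (M : Set X) : Prop :=
  M.Nonempty ∧ IsClosed M ∧ T '' M = M ∧
    ∀ M', M' ⊆ M → M'.Nonempty → IsClosed M' → T '' M' = M' → M' = M

/-- `(X, T)` is essentially minimal: it has a unique minimal set. -/
def EssentiallyMinimal {X : Type*} [TopologicalSpace X] (T : X → X) : Prop :=
  ∃! M, IsMinimalSet T M

/-- `A` has the finite covering property: `⋃_{−N ≤ n ≤ N} T^n A = X` for some `N`. -/
def FiniteCovering {X : Type*} [TopologicalSpace X] (T : X ≃ₜ X) (A : Set X) : Prop :=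
  ∃ N : ℕ, (⋃ n ∈ Finset.Icc (-(N : ℤ)) (N : ℤ), ⇑(T.toEquiv ^ n) '' A) = Set.univ

/-- A finite partition of the whole space into clopen sets. -/
def IsClopenPartition {X : Type*} [TopologicalSpace X] (Q : Finset (Set X)) : Prop :=
  (∀ q ∈ Q, IsClopen q) ∧ (⋃ q ∈ Q, q) = Set.univ ∧
    ∀ q ∈ Q, ∀ q' ∈ Q, q ≠ q' → Disjoint q q'

/-- A Kakutani–Rohlin partition of `(X, T)`: clopen bases `B 0, …, B (d−1)` with heights
`h 0, …, h (d−1)` such that the sets `T^j (B k)` (`j < h k`) form a partition of `X` and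
`⋃_k T^{h k} (B k) = ⋃_k B k`. -/
structure KRPart {X : Type*} [TopologicalSpace X] (T : X → X) where
  d : ℕ
  B : Fin d → Set X
  h : Fin d → ℕ
  d_pos : 0 < d
  h_pos : ∀ k, 0 < h k
  clopen : ∀ k, IsClopen (B k)
  disj : ∀ (k k' : Fin d) (j j' : ℕ), j < h k → j' < h k' → (k, j) ≠ (k', j') →
    Disjoint (T^[j] '' B k) (T^[j'] '' B k')
  cover : (⋃ k, ⋃ j ∈ Finset.range (h k), T^[j] '' B k) = Set.univ
  base_eq : (⋃ k, T^[h k] '' B k) = ⋃ k, B k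

/-- The base of a Kakutani–Rohlin partition. -/
def KRPart.base {X : Type*} [TopologicalSpace X] {T : X → X} (P : KRPart T) : Set X :=
  ⋃ k, P.B k

/-- `(X, T)` has topological rank at most `m` (Kakutani–Rohlin characterization). -/
def TopRankLEGen {X : Type*} [MetricSpace X] (T : X → X) (m : ℕ) : Prop :=
  ∃ x : X, ∀ ε : ℝ, 0 < ε → ∃ P : KRPart T, P.d ≤ m ∧
    (∀ (k : Fin P.d) (j : ℕ), j < P.h k → Metric.diam (T^[j] '' P.B k) < ε) ∧
    Metric.diam P.base < ε ∧ x ∈ P.base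

/-! ### Kakutani–Rohlin partitions and topological rank for subshifts -/

/-- A Kakutani–Rohlin partition of the subshift `(X, σ)`. -/
structure KRPartOn (X : Set (ℤ → Bool)) where
  d : ℕ
  B : Fin d → Set (ℤ → Bool)
  h : Fin d → ℕ
  d_pos : 0 < d
  h_pos : ∀ k, 0 < h k
  subset : ∀ k, B k ⊆ X
  clopen : ∀ k, IsClopen {y : X | (y : ℤ → Bool) ∈ B k}
  disj : ∀ (k k' : Fin d) (j j' : ℕ), j < h k → j' < h k' → (k, j) ≠ (k', j') →
    Disjoint (shift^[j] '' B k) (shift^[j'] '' B k')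
  cover : (⋃ k, ⋃ j ∈ Finset.range (h k), shift^[j] '' B k) = X
  base_eq : (⋃ k, shift^[h k] '' B k) = ⋃ k, B k

/-- The base of a Kakutani–Rohlin partition of a subshift. -/
def KRPartOn.base {X : Set (ℤ → Bool)} (P : KRPartOn X) : Set (ℤ → Bool) := ⋃ k, P.B k

/-- All elements of `A` agree on the window `[−N, N]`; for the canonical metric on `2^ℤ`
this says exactly that `diam(A) ≤ 2^{−N}`. -/
def AgreeOn (N : ℕ) (A : Set (ℤ → Bool)) : Prop :=
  ∀ y ∈ A, ∀ z ∈ A, ∀ k : ℤ, |k| ≤ (N : ℤ) → y k = z k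

/-- The subshift `(X, σ)` has topological rank at most `m` (Kakutani–Rohlin
characterization, with smallness of diameters expressed by agreement on windows,
matching the canonical compatible metric on `2^ℤ`). -/
def TopRankLE (X : Set (ℤ → Bool)) (m : ℕ) : Prop :=
  ∃ x ∈ X, ∀ N : ℕ, ∃ P : KRPartOn X, P.d ≤ m ∧
    (∀ (k : Fin P.d) (j : ℕ), j < P.h k → AgreeOn N (shift^[j] '' P.B k)) ∧
    AgreeOn N P.base ∧ x ∈ P.base

/-! ### Factor maps and conjugacy -/

/-- `φ` is a (topological) factor map from the subshift `Y` onto the subshift `X`. -/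
def IsFactorMapOn (Y X : Set (ℤ → Bool)) (φ : (ℤ → Bool) → (ℤ → Bool)) : Prop :=
  ContinuousOn φ Y ∧ φ '' Y = X ∧ ∀ y ∈ Y, φ (shift y) = shift (φ y)

/-- `X` is a topological factor of `Y`. -/
def SubshiftFactor (Y X : Set (ℤ → Bool)) : Prop := ∃ φ, IsFactorMapOn Y X φ

/-- The subshifts `Y` and `X` are conjugate. -/
def SubshiftConjugate (Y X : Set (ℤ → Bool)) : Prop :=
  ∃ φ, IsFactorMapOn Y X φ ∧ Set.InjOn φ Y

/-- `(X, T)` is conjugate to the subshift `(Y, σ)`. -/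
def ConjugateToSubshift {X : Type*} [TopologicalSpace X] (T : X ≃ₜ X) (Y : Set (ℤ → Bool)) :
    Prop :=
  ∃ φ : X → (ℤ → Bool), Continuous φ ∧ Function.Injective φ ∧ Set.range φ = Y ∧
    ∀ x, φ (T x) = shift (φ x)

/-- The Boolean algebra of sets generated by `G`. -/
inductive GenBoolAlg {X : Type*} (G : Set (Set X)) : Set X → Prop
  | basic (A : Set X) : A ∈ G → GenBoolAlg G A
  | empty : GenBoolAlg G ∅
  | compl (A : Set X) : GenBoolAlg G A → GenBoolAlg G Aᶜ
  | union (A B : Set X) : GenBoolAlg G A → GenBoolAlg G B → GenBoolAlg G (A ∪ B)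

/-- `(T, A)` is generating: the smallest Boolean algebra containing all `T^n A` contains
every clopen set. -/
def Generating {X : Type*} [TopologicalSpace X] (T : X ≃ₜ X) (A : Set X) : Prop :=
  ∀ U : Set X, IsClopen U → GenBoolAlg {B : Set X | ∃ n : ℤ, B = ⇑(T.toEquiv ^ n) '' A} U

/-- The return-times word `Ret_A(x₀) ∈ 2^ℤ` of `x₀` to `A`. -/
noncomputable def retWord {X : Type*} [TopologicalSpace X] (T : X ≃ₜ X) (A : Set X) (x₀ : X) : ℤ → Bool :=
  fun n => @ite _ ((T.toEquiv ^ n) x₀ ∈ A) (Classical.propDecidable _) true false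

/-! ### Auxiliary development -/

section Aux

/-! #### List infrastructure -/

/-- positional occurrence in a finite word -/
def OccursAtFin (u w : Word) (p : ℕ) : Prop :=
  p + u.length ≤ w.length ∧ ∀ k, k < u.length → u.getD k false = w.getD (p + k) false

lemma getD_append_right' (a b : Word) (k : ℕ) :
    (a ++ b).getD (a.length + k) false = b.getD k false := by
  simp [List.getD_eq_getElem?_getD, List.getElem?_append_right (Nat.le_add_right _ _)]

lemma getD_append_left' (a b : Word) {k : ℕ} (hk : k < a.length) :
    (a ++ b).getD k false = a.getD k false := by
  simp [List.getD_eq_getElem?_getD, List.getElem?_append_left hk]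

lemma occursAtFin_infix {u w : Word} {p : ℕ} (h : OccursAtFin u w p) : u <:+: w := by
  have hle : p + u.length ≤ w.length := h.1
  have h1 : (w.drop p).take u.length <:+: w :=
    ((w.drop p).take_prefix u.length).isInfix.trans (w.drop_suffix p).isInfix
  have hlen : ((w.drop p).take u.length).length = u.length := by
    simp only [List.length_take, List.length_drop]; omega
  have : u = (w.drop p).take u.length := by
    apply List.ext_getElem hlen.symm
    intro k hk1 hk2
    have hk : k < u.length := hk1
    have hpk : p + k < w.length := by omega
    have := h.2 k hk
    rw [List.getD_eq_getElem u false hk1, List.getD_eq_getElem w false hpk] at this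
    rw [this]
    simp [List.getElem_take, List.getElem_drop]
  rw [this]; exact h1

lemma infix_occursAtFin {u w : Word} (h : u <:+: w) : ∃ p, OccursAtFin u w p := by
  obtain ⟨s, t, rfl⟩ := h
  refine ⟨s.length, by simp, fun k hk => ?_⟩
  rw [show s ++ u ++ t = s ++ (u ++ t) by simp, getD_append_right' s (u ++ t) k,
    getD_append_left' u t hk]

lemma infix_append_tri {u a c : Word} (h : u <:+: a ++ c) :
    u <:+: a ∨ u <:+: c ∨
      ∃ u₁ u₂, u = u₁ ++ u₂ ∧ u₁ ≠ [] ∧ u₂ ≠ [] ∧ u₁ <:+ a ∧ u₂ <+: c := by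
  induction a with
  | nil => exact Or.inr (Or.inl (by simpa using h))
  | cons x a' ih =>
    rw [List.cons_append, List.infix_cons_iff] at h
    rcases h with h | h
    · rcases le_or_gt u.length (x :: a').length with hle | hlt
      · exact Or.inl (List.IsPrefix.isInfix
          (List.prefix_of_prefix_length_le h (by simp) hle))
      · have hpre : x :: a' <+: u :=
          List.prefix_of_prefix_length_le (by simp) h (le_of_lt hlt)
        obtain ⟨u₂, rfl⟩ := hpre
        refine Or.inr (Or.inr ⟨x :: a', u₂, rfl, by simp, ?_, List.suffix_refl _, ?_⟩)
        · intro hc; subst hc; simp at hlt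
        · obtain ⟨r, hr⟩ := h
          rw [List.append_assoc] at hr
          exact ⟨r, List.append_cancel_left hr⟩
    · rcases ih h with h1 | h1 | ⟨u₁, u₂, he, hn1, hn2, hs, hp⟩
      · exact Or.inl (List.infix_cons h1)
      · exact Or.inr (Or.inl h1)
      · exact Or.inr (Or.inr ⟨u₁, u₂, he, hn1, hn2,
          hs.trans (List.suffix_cons x a'), hp⟩)

lemma infix_replicate' {u : Word} {s : ℕ} (h : u <:+: spacer s) :
    u = List.replicate u.length true :=
  List.eq_replicate_of_mem fun _ hb => List.eq_of_mem_replicate (h.sublist.subset hb)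

lemma replicate_infix_of_le {k l : ℕ} (h : k ≤ l) :
    List.replicate k true <:+: List.replicate l true := by
  refine ⟨[], List.replicate (l - k) true, ?_⟩
  simp [← List.replicate_add]; omega

/-! #### Building lemmas -/

lemma Building.word_eq {b : Building} {v : Word} {s : ℕ} {tl : List (Word × ℕ)}
    (h : b.pairs = (v, s) :: tl) :
    b.word = v ++ spacer s ++ (Building.mk tl b.last).word := by
  rw [Building.word, h]; rfl

lemma Building.pieces_eq {b : Building} {v : Word} {s : ℕ} {tl : List (Word × ℕ)}
    (h : b.pairs = (v, s) :: tl) :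
    b.pieces = v :: (Building.mk tl b.last).pieces := by
  rw [Building.pieces, h]; rfl

lemma Building.firstPiece_eq {b : Building} {v : Word} {s : ℕ} {tl : List (Word × ℕ)}
    (h : b.pairs = (v, s) :: tl) : b.firstPiece = v := by
  rw [Building.firstPiece, Building.pieces_eq h]; rfl

lemma piece_infix : ∀ (pairs : List (Word × ℕ)) (last v : Word),
    v ∈ (Building.mk pairs last).pieces → v <:+: (Building.mk pairs last).word := by
  intro pairs
  induction pairs with
  | nil =>
    intro last v hv
    simp [Building.pieces] at hv
    subst hv
    exact List.infix_refl _
  | cons p tl ih =>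
    intro last v hv
    obtain ⟨w, s⟩ := p
    rw [Building.pieces_eq rfl] at hv
    rw [Building.word_eq rfl]
    rcases List.mem_cons.mp hv with rfl | hv
    · rw [List.append_assoc]; exact (List.prefix_append _ _).isInfix
    · exact (ih last v hv).trans (List.suffix_append _ _).isInfix

lemma exists_prefix_piece : ∀ (b : Building), ∃ p ∈ b.pieces, p <+: b.word := by
  intro b
  rcases hb : b.pairs with _ | ⟨⟨v, s⟩, tl⟩
  · refine ⟨b.last, ?_, ?_⟩
    · simp [Building.pieces, hb]
    · rw [Building.word, hb]; exact List.prefix_refl _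
  · refine ⟨v, ?_, ?_⟩
    · rw [Building.pieces_eq hb]; exact List.mem_cons_self
    · rw [Building.word_eq hb, List.append_assoc]; exact List.prefix_append _ _

def Building.glue (b : Building) (s : ℕ) (b' : Building) : Building :=
  ⟨b.pairs ++ (b.last, s) :: b'.pairs, b'.last⟩

lemma foldr_word_append (l : List (Word × ℕ)) (x y : Word) :
    l.foldr (fun p acc => p.1 ++ spacer p.2 ++ acc) (x ++ y)
      = l.foldr (fun p acc => p.1 ++ spacer p.2 ++ acc) x ++ y := by
  induction l with
  | nil => rfl
  | cons p tl ih =>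
    simp only [List.foldr_cons, ih]
    rw [← List.append_assoc]

lemma Building.glue_word (b : Building) (s : ℕ) (b' : Building) :
    (b.glue s b').word = b.word ++ spacer s ++ b'.word := by
  rw [Building.glue, Building.word, Building.word, List.foldr_append]
  show b.pairs.foldr _ (b.last ++ spacer s ++ b'.word) = _
  rw [List.append_assoc, foldr_word_append, ← Building.word, ← List.append_assoc]

lemma Building.glue_pieces (b : Building) (s : ℕ) (b' : Building) :
    (b.glue s b').pieces = b.pieces ++ b'.pieces := by
  simp [Building.glue, Building.pieces]

end Aux

section Aux2

/-! #### Shift infrastructure -/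

/-- The shift by `d` as a homeomorphism. -/
def shiftBy (d : ℤ) : (ℤ → Bool) ≃ₜ (ℤ → Bool) where
  toFun y k := y (k + d)
  invFun y k := y (k - d)
  left_inv y := by funext k; simp
  right_inv y := by funext k; simp
  continuous_toFun := continuous_pi fun k => continuous_apply (k + d)
  continuous_invFun := continuous_pi fun k => continuous_apply (k - d)

lemma shiftBy_apply (d : ℤ) (y : ℤ → Bool) (k : ℤ) : shiftBy d y k = y (k + d) := rfl

lemma shift_eq_shiftBy : shift = ⇑(shiftBy 1) := rfl

lemma sorbit_eq_range (x : ℤ → Bool) : sorbit x = Set.range fun d : ℤ => shiftBy d x := rfl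

lemma shiftBy_shiftBy (d e : ℤ) (y : ℤ → Bool) :
    shiftBy d (shiftBy e y) = shiftBy (d + e) y := by
  funext k; show y (k + d + e) = y (k + (d + e)); rw [add_assoc]

lemma shiftBy_zero (y : ℤ → Bool) : shiftBy 0 y = y := by funext k; show y (k + 0) = y k; rw [add_zero]

lemma mem_sorbit_self (x : ℤ → Bool) : x ∈ sorbit x := ⟨0, shiftBy_zero x⟩

lemma shift_image_sorbit (x : ℤ → Bool) : shift '' sorbit x = sorbit x := by
  rw [shift_eq_shiftBy, sorbit_eq_range]
  ext y
  constructor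
  · rintro ⟨-, ⟨d, rfl⟩, rfl⟩
    exact ⟨1 + d, (shiftBy_shiftBy 1 d x).symm⟩
  · rintro ⟨d, rfl⟩
    exact ⟨shiftBy (d - 1) x, ⟨d - 1, rfl⟩, by rw [shiftBy_shiftBy]; ring_nf⟩

lemma shiftBy_mem_of_inv {M : Set (ℤ → Bool)} (hM : shift '' M = M) {x : ℤ → Bool}
    (hx : x ∈ M) : ∀ d : ℤ, shiftBy d x ∈ M := by
  have h1 : ∀ y ∈ M, shiftBy 1 y ∈ M := by
    intro y hy; exact hM ▸ Set.mem_image_of_mem shift hy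
  have h2 : ∀ y ∈ M, shiftBy (-1) y ∈ M := by
    intro y hy
    rw [← hM] at hy
    obtain ⟨w, hw, rfl⟩ := hy
    have : shiftBy (-1) (shift w) = w := by
      rw [shift_eq_shiftBy, shiftBy_shiftBy]; simp [shiftBy_zero]
    rwa [this]
  intro d
  induction d using Int.induction_on with
  | zero => rwa [shiftBy_zero]
  | succ k ih => have := h1 _ ih; rwa [shiftBy_shiftBy, add_comm 1 (k : ℤ)] at this
  | pred k ih => have := h2 _ ih; rwa [shiftBy_shiftBy, show (-1 : ℤ) + -(k:ℤ) = -(k:ℤ) - 1 by ring] at this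

lemma sorbit_subset {M : Set (ℤ → Bool)} (hM : shift '' M = M) {x : ℤ → Bool}
    (hx : x ∈ M) : sorbit x ⊆ M := by
  rw [sorbit_eq_range]
  rintro - ⟨d, rfl⟩
  exact shiftBy_mem_of_inv hM hx d

lemma shift_image_closure_sorbit (x : ℤ → Bool) :
    shift '' closure (sorbit x) = closure (sorbit x) := by
  rw [shift_eq_shiftBy, Homeomorph.image_closure, ← shift_eq_shiftBy, shift_image_sorbit]

/-! #### Opens in the product topology -/

lemma isOpen_coord (t : ℤ) (bv : Bool) : IsOpen {v : ℤ → Bool | v t = bv} := by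
  have : {v : ℤ → Bool | v t = bv} = (fun v : ℤ → Bool => v t) ⁻¹' ({bv} : Set Bool) := by
    ext v; simp
  rw [this]
  exact (continuous_apply t).isOpen_preimage _ (isOpen_discrete _)

lemma isOpen_agreeF (x : ℤ → Bool) (F : Finset ℤ) :
    IsOpen {y : ℤ → Bool | ∀ k ∈ F, y k = x k} := by
  have : {y : ℤ → Bool | ∀ k ∈ F, y k = x k} = ⋂ k ∈ F, {y : ℤ → Bool | y k = x k} := by
    ext y; simp
  rw [this]
  exact isOpen_biInter_finset fun k _ => isOpen_coord k (x k)

lemma isOpen_agreeR (y : ℤ → Bool) (q : ℤ) (l : ℕ) :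
    IsOpen {v : ℤ → Bool | ∀ j : ℕ, j < l → v (q + j) = y (q + j)} := by
  have : {v : ℤ → Bool | ∀ j : ℕ, j < l → v (q + j) = y (q + j)}
      = ⋂ j ∈ Finset.range l, {v : ℤ → Bool | v (q + j) = y (q + j)} := by
    ext v; simp
  rw [this]
  exact isOpen_biInter_finset fun j _ => isOpen_coord _ _

lemma exists_agree_subset {O : Set (ℤ → Bool)} {z : ℤ → Bool} (hO : IsOpen O) (hz : z ∈ O) :
    ∃ P : ℕ, ∀ y, (∀ k : ℤ, k.natAbs ≤ P → y k = z k) → y ∈ O := by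
  obtain ⟨I, uu, h1, h2⟩ := isOpen_pi_iff.mp hO z hz
  refine ⟨I.sup Int.natAbs, fun y hy => h2 ?_⟩
  intro a ha
  have : y a = z a := hy a (Finset.le_sup ha)
  rw [this]
  exact (h1 a ha).2

/-! #### Windows of bi-infinite words -/

/-- The finite window of `x` of length `l` starting at `a`. -/
def winB (x : ℤ → Bool) (a : ℤ) (l : ℕ) : Word := (List.range l).map fun k : ℕ => x (a + (k : ℤ))

@[simp] lemma winB_length (x : ℤ → Bool) (a : ℤ) (l : ℕ) : (winB x a l).length = l := by
  rw [winB, List.length_map, List.length_range]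

lemma winB_getD (x : ℤ → Bool) (a : ℤ) (l : ℕ) {k : ℕ} (hk : k < l) :
    (winB x a l).getD k false = x (a + k) := by
  have h1 : k < (winB x a l).length := by rw [winB_length]; exact hk
  rw [List.getD_eq_getElem _ _ h1]
  simp only [winB, List.getElem_map, List.getElem_range]

lemma occursAtBi_winB (x : ℤ → Bool) (a : ℤ) (l : ℕ) : OccursAtBi (winB x a l) x a := by
  intro k hk
  rw [winB_getD x a l (by simpa using hk)]

lemma occursBi_of_fin {w r : Word} {x : ℤ → Bool} {a : ℤ} {q : ℕ}
    (h1 : OccursAtBi w x a) (h2 : OccursAtFin r w q) : OccursAtBi r x (a + q) := by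
  intro k hk
  have hq : q + k < w.length := by have := h2.1; omega
  have := h1 (q + k) hq
  rw [← h2.2 k hk] at this
  rw [this]
  congr 1
  push_cast
  ring

lemma occursAtFin_append_left {u a c : Word} {q : ℕ} (h : OccursAtFin u c q) :
    OccursAtFin u (a ++ c) (a.length + q) := by
  constructor
  · simp only [List.length_append]; have := h.1; omega
  · intro k hk
    rw [show a.length + q + k = a.length + (q + k) by omega, getD_append_right']
    exact h.2 k hk

lemma occursAtFin_of_prefix {u w w' : Word} {q : ℕ} (h : OccursAtFin u w q) (hp : w <+: w') :
    OccursAtFin u w' q := by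
  obtain ⟨r, rfl⟩ := hp
  constructor
  · have := h.1; simp only [List.length_append]; omega
  · intro k hk
    rw [getD_append_left' _ _ (show q + k < w.length by have := h.1; omega)]
    exact h.2 k hk

end Aux2

section Constr

variable {n : ℕ} (c : RankConstruction n)

lemma mem_level (hpr : c.Proper) {i j : ℕ} (h1 : 1 ≤ j) (h2 : j ≤ n) :
    c.wd i j ∈ levelSet c.ni c.wd i :=
  ⟨j, h1, by rw [hpr.1]; exact h2, rfl⟩

lemma level_mem (hpr : c.Proper) {i : ℕ} {w : Word} (h : w ∈ levelSet c.ni c.wd i) :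
    ∃ j, 1 ≤ j ∧ j ≤ n ∧ c.wd i j = w := by
  obtain ⟨j, h1, h2, h3⟩ := h
  exact ⟨j, h1, by rw [← hpr.1 i]; exact h2, h3⟩

lemma step_infix (hpr : c.Proper) {i j j' : ℕ} (hj1 : 1 ≤ j) (hj2 : j ≤ n)
    (hj'1 : 1 ≤ j') (hj'2 : j' ≤ n) : c.wd i j <:+: c.wd (i + 1) j' := by
  have hni : j' ≤ c.ni (i + 1) := by rw [hpr.1]; exact hj'2
  have hmem : c.wd i j ∈ (c.bld i j').pieces :=
    hpr.2 i j' hj'1 hni _ (mem_level c hpr hj1 hj2)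
  have := piece_infix (c.bld i j').pairs (c.bld i j').last _ hmem
  rwa [c.bld_word i j' hj'1 hni] at this

lemma chain_infix (hpr : c.Proper) {i i' j j' : ℕ} (hii : i < i') (hj1 : 1 ≤ j)
    (hj2 : j ≤ n) (hj'1 : 1 ≤ j') (hj'2 : j' ≤ n) : c.wd i j <:+: c.wd i' j' := by
  induction i', hii using Nat.le_induction with
  | base => exact step_infix c hpr hj1 hj2 hj'1 hj'2
  | succ i' hi' ih =>
    exact ih.trans (step_infix c hpr hj'1 hj'2 hj'1 hj'2)

lemma prefix_W (i : ℕ) : c.wd i 1 <+: c.wd (i + 1) 1 := by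
  have h1 : (1 : ℕ) ≤ c.ni (i + 1) := c.ni_pos _
  have hfrom := c.bld_from i 1 le_rfl h1
  rcases hb : (c.bld i 1).pairs with _ | ⟨⟨v, s⟩, tl⟩
  · exact absurd hb hfrom.1
  · have hv : v = c.wd i 1 := by
      have := c.bld_start i
      rwa [Building.firstPiece_eq hb] at this
    have : c.wd i 1 <+: (c.bld i 1).word := by
      rw [Building.word_eq hb, ← hv, List.append_assoc]
      exact List.prefix_append _ _
    rwa [c.bld_word i 1 le_rfl h1] at this

lemma lenW_mono : Monotone fun i => (c.wd i 1).length :=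
  monotone_nat_of_le_succ fun i => (prefix_W c i).length_le

variable {V : ℕ → Bool}

lemma occursFin_W (hlim : c.HasLimit V) {u : Word} {i p : ℕ}
    (h : OccursAtFin u (c.wd i 1) p) : OccursAtInf u V p := by
  intro k hk
  rw [h.2 k hk]
  exact (hlim.1 i) (p + k) (by have := h.1; omega)

lemma occursInInf_of_infix_W (hlim : c.HasLimit V) {u : Word} {i : ℕ}
    (h : u <:+: c.wd i 1) : OccursInInf u V := by
  obtain ⟨p, hp⟩ := infix_occursAtFin h
  exact ⟨p, occursFin_W c hlim hp⟩

lemma occursFin_W_of_inf (hlim : c.HasLimit V) {u : Word} {i p : ℕ}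
    (h : OccursAtInf u V p) (hlen : p + u.length ≤ (c.wd i 1).length) :
    OccursAtFin u (c.wd i 1) p := by
  refine ⟨hlen, fun k hk => ?_⟩
  rw [h k hk, (hlim.1 i) (p + k) (by omega)]

lemma infix_W_of_occurs (hlim : c.HasLimit V) {u : Word} (h : OccursInInf u V) :
    ∃ i, ∀ i', i ≤ i' → u <:+: c.wd i' 1 := by
  obtain ⟨p, hp⟩ := h
  obtain ⟨i, hi⟩ := hlim.2 (p + u.length)
  refine ⟨i, fun i' hii => ?_⟩
  have hlen : p + u.length ≤ (c.wd i' 1).length := le_trans hi (lenW_mono c hii)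
  exact occursAtFin_infix (occursFin_W_of_inf c hlim hp hlen)

lemma W_occurs (hlim : c.HasLimit V) (i : ℕ) : OccursInInf (c.wd i 1) V :=
  ⟨0, fun k hk => by rw [(hlim.1 i) k hk]; norm_num⟩

/-- Flattening a building whose pieces can all be flattened. -/
lemma flatten_building (S : Set Word) :
    ∀ (pairs : List (Word × ℕ)) (last : Word),
      (∀ v ∈ (Building.mk pairs last).pieces,
        ∃ fb : Building, (∀ p ∈ fb.pieces, p ∈ S) ∧ fb.word = v) →
      ∃ b : Building, (∀ p ∈ b.pieces, p ∈ S) ∧ b.word = (Building.mk pairs last).word := by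
  intro pairs
  induction pairs with
  | nil =>
    intro last h
    obtain ⟨fb, h1, h2⟩ := h last (by simp [Building.pieces])
    exact ⟨fb, h1, h2⟩
  | cons p tl ih =>
    intro last h
    obtain ⟨w, s⟩ := p
    obtain ⟨fb1, hfb1, hw1⟩ := h w (by rw [Building.pieces_eq rfl]; exact List.mem_cons_self)
    obtain ⟨fb2, hfb2, hw2⟩ := ih last (fun v hv => h v (by rw [Building.pieces_eq rfl]; exact List.mem_cons_of_mem _ hv))
    refine ⟨fb1.glue s fb2, ?_, ?_⟩
    · intro q hq
      rw [Building.glue_pieces] at hq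
      rcases List.mem_append.mp hq with hq | hq
      · exact hfb1 q hq
      · exact hfb2 q hq
    · rw [Building.glue_word, hw1, hw2, Building.word_eq (b := Building.mk ((w,s)::tl) last) rfl]

/-- Every `wd i j` (for `i ≥ I`) flattens to a building with pieces in `S_I`. -/
lemma flat (hpr : c.Proper) (I : ℕ) : ∀ i, I ≤ i → ∀ j, 1 ≤ j → j ≤ n →
    ∃ b : Building, (∀ p ∈ b.pieces, p ∈ levelSet c.ni c.wd I) ∧ b.word = c.wd i j := by
  intro i hi
  induction i, hi using Nat.le_induction with
  | base =>
    intro j hj1 hj2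
    exact ⟨⟨[], c.wd I j⟩, by
      intro p hp
      simp [Building.pieces] at hp
      subst hp
      exact mem_level c hpr hj1 hj2, rfl⟩
  | succ i hi ih =>
    intro j hj1 hj2
    have hni : j ≤ c.ni (i + 1) := by rw [hpr.1]; exact hj2
    have hfrom := c.bld_from i j hj1 hni
    have hword := c.bld_word i j hj1 hni
    obtain ⟨b, hb1, hb2⟩ := flatten_building (levelSet c.ni c.wd I)
      (c.bld i j).pairs (c.bld i j).last (by
        intro v hv
        obtain ⟨j', hj'1, hj'2, hj'3⟩ := level_mem c hpr (hfrom.2 v hv)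
        obtain ⟨fb, h1, h2⟩ := ih j' hj'1 hj'2
        exact ⟨fb, h1, by rw [h2, hj'3]⟩)
    exact ⟨b, hb1, by rw [hb2]; exact hword⟩

end Constr

section Win

lemma win_lemma (t : Word) (L m : ℕ) :
    ∀ (pairs : List (Word × ℕ)) (last : Word),
      (∀ p ∈ (Building.mk pairs last).pieces, p.length ≤ L ∧ t <:+: p) →
      ∀ u : Word, u <:+: (Building.mk pairs last).word →
        2 * L + m + 1 ≤ u.length →
        ¬ (List.replicate (m + 1) true <:+: u) → t <:+: u := by
  intro pairs
  induction pairs with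
  | nil =>
    intro last hp u hu hlen hrun
    exfalso
    have h1 : u.length ≤ ((Building.mk ([] : List (Word × ℕ)) last).word).length := hu.length_le
    have h2 : last.length ≤ L := (hp last (by simp [Building.pieces])).1
    have h3 : (Building.mk ([] : List (Word × ℕ)) last).word = last := rfl
    rw [h3] at h1
    omega
  | cons pr tl ih =>
    intro last hp u hu hlen hrun
    obtain ⟨v, s⟩ := pr
    have hpv := hp v (by
      rw [Building.pieces_eq (b := Building.mk ((v,s)::tl) last) rfl]
      exact List.mem_cons_self)
    have hp' : ∀ p ∈ (Building.mk tl last).pieces, p.length ≤ L ∧ t <:+: p :=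
      fun p hpp => hp p (by
        rw [Building.pieces_eq (b := Building.mk ((v,s)::tl) last) rfl]
        exact List.mem_cons_of_mem _ hpp)
    rw [Building.word_eq (b := Building.mk ((v,s)::tl) last) rfl, List.append_assoc] at hu
    set rest := (Building.mk tl last).word with hrest
    have hFP : ∀ b' : Word, b' <+: rest → L ≤ b'.length → t <:+: b' := by
      intro b' hb' hlb'
      obtain ⟨p2, hp2mem, hp2pre⟩ := exists_prefix_piece (Building.mk tl last)
      have h2 := hp' p2 hp2mem
      exact h2.2.trans (List.prefix_of_prefix_length_le hp2pre hb' (le_trans h2.1 hlb')).isInfix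
    rcases infix_append_tri hu with h1 | h1 | ⟨u₁, u₂, hequ, hn1, hn2, hs1, hp1⟩
    · exfalso; have := h1.length_le; have := hpv.1; omega
    · rcases infix_append_tri h1 with h2 | h2 | ⟨a, b', hequ, hn1, hn2, hs2, hp2⟩
      · exfalso
        apply hrun
        rw [infix_replicate' h2]
        exact replicate_infix_of_le (by
          have := h2.length_le
          simp only [spacer, List.length_replicate] at this ⊢
          omega)
      · exact ih last hp' u h2 hlen hrun
      · -- u = a ++ b', a <:+ spacer s, b' <+: rest
        have ha : a = List.replicate a.length true := infix_replicate' hs2.isInfix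
        have hale : a.length ≤ m := by
          by_contra hc
          apply hrun
          have h3 : List.replicate (m+1) true <:+: a := by
            rw [ha]; exact replicate_infix_of_le (by omega)
          exact h3.trans (hequ ▸ (List.prefix_append a b').isInfix)
        have hlb' : L ≤ b'.length := by
          have : u.length = a.length + b'.length := by rw [hequ, List.length_append]
          omega
        exact (hFP b' hp2 hlb').trans (hequ ▸ (List.suffix_append a b').isInfix)
    · -- u = u₁ ++ u₂, u₁ <:+ v, u₂ <+: spacer s ++ rest
      have hu1 : u₁.length ≤ L := le_trans hs1.length_le hpv.1
      have hlu2 : L + m + 1 ≤ u₂.length := by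
        have : u.length = u₁.length + u₂.length := by rw [hequ, List.length_append]
        omega
      have hu2suf : u₂ <:+: u := hequ ▸ (List.suffix_append u₁ u₂).isInfix
      rcases le_or_gt u₂.length s with hcase | hcase
      · exfalso
        apply hrun
        have hu2sp : u₂ <+: spacer s :=
          List.prefix_of_prefix_length_le hp1 (List.prefix_append _ _)
            (by simpa [spacer] using hcase)
        have h4 : u₂ = List.replicate u₂.length true := infix_replicate' hu2sp.isInfix
        have h5 : List.replicate (m+1) true <:+: u₂ := by
          rw [h4]; exact replicate_infix_of_le (by omega)
        exact h5.trans hu2suf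
      · have hsp : spacer s <+: u₂ :=
          List.prefix_of_prefix_length_le (List.prefix_append _ _) hp1
            (by simp only [spacer, List.length_replicate]; omega)
        obtain ⟨c', hc'⟩ := hsp
        have hsm : s ≤ m := by
          by_contra hc
          apply hrun
          have h3 : List.replicate (m+1) true <+: spacer s := by
            refine ⟨List.replicate (s - (m+1)) true, ?_⟩
            rw [spacer, ← List.replicate_add]
            congr 1
            omega
          have h4 : spacer s <+: u₂ := ⟨c', hc'⟩
          exact (h3.trans h4).isInfix.trans hu2suf
        have hc'pre : c' <+: rest := by
          obtain ⟨r, hr⟩ := hp1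
          rw [← hc', List.append_assoc] at hr
          exact ⟨r, List.append_cancel_left hr⟩
        have hlc' : L ≤ c'.length := by
          have : u₂.length = s + c'.length := by
            rw [← hc']; simp [spacer]
          omega
        have hc'suf : c' <:+ u₂ := ⟨spacer s, hc'⟩
        exact (hFP c' hc'pre hlc').trans (hc'suf.isInfix.trans hu2suf)

lemma key_lemma {n : ℕ} (c : RankConstruction n) (hn : 1 ≤ n) (hpr : c.Proper)
    {V : ℕ → Bool} (hlim : c.HasLimit V) {x : ℤ → Bool} (hx : x ∈ XV V) (m : ℕ)
    (hrun : ¬ ∃ p, OccursAtBi (List.replicate (m + 1) true) x p) :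
    ∀ u', OccursInInf u' V → ∃ p : ℤ, OccursAtBi u' x p := by
  intro u' hu'
  obtain ⟨I, hI⟩ := infix_W_of_occurs c hlim hu'
  have hIinf : u' <:+: c.wd I 1 := hI I le_rfl
  set L := (Finset.Icc 1 n).sup (fun j => (c.wd (I+1) j).length) with hL
  set u := winB x 0 (2 * L + m + 1) with hu
  have hulen : u.length = 2 * L + m + 1 := winB_length x 0 _
  obtain ⟨p, hp⟩ := hx u ⟨0, occursAtBi_winB x 0 _⟩
  obtain ⟨i₀, hi₀⟩ := hlim.2 (p + (2 * L + m + 1))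
  have hlen'' : p + u.length ≤ (c.wd (max i₀ (I + 1)) 1).length := by
    rw [hulen]
    exact le_trans hi₀ (lenW_mono c (le_max_left _ _))
  have huW : u <:+: c.wd (max i₀ (I + 1)) 1 :=
    occursAtFin_infix (occursFin_W_of_inf c hlim hp hlen'')
  obtain ⟨b, hb1, hb2⟩ := flat c hpr (I+1) (max i₀ (I + 1)) (le_max_right _ _) 1 le_rfl hn
  have hpieces : ∀ q ∈ b.pieces, q.length ≤ L ∧ c.wd I 1 <:+: q := by
    intro q hq
    obtain ⟨j, hj1, hj2, hj3⟩ := level_mem c hpr (hb1 q hq)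
    constructor
    · rw [← hj3]
      exact Finset.le_sup (f := fun j => (c.wd (I+1) j).length) (Finset.mem_Icc.mpr ⟨hj1, hj2⟩)
    · rw [← hj3]
      exact step_infix c hpr le_rfl hn hj1 hj2
  have hrun_u : ¬ (List.replicate (m+1) true <:+: u) := by
    intro hcon
    obtain ⟨q, hq⟩ := infix_occursAtFin hcon
    exact hrun ⟨0 + q, occursBi_of_fin (occursAtBi_winB x 0 _) hq⟩
  have hword : u <:+: (Building.mk b.pairs b.last).word := by
    rw [show (Building.mk b.pairs b.last) = b from rfl, hb2]
    exact huW
  have hwin : c.wd I 1 <:+: u :=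
    win_lemma (c.wd I 1) L m b.pairs b.last hpieces u hword (le_of_eq hulen.symm) hrun_u
  obtain ⟨q, hq⟩ := infix_occursAtFin hwin
  obtain ⟨q', hq'⟩ := infix_occursAtFin hIinf
  exact ⟨0 + q + q', occursBi_of_fin (occursBi_of_fin (occursAtBi_winB x 0 _) hq) hq'⟩

end Win

section XVStuff

lemma occursBi_shiftBy {u : Word} {y : ℤ → Bool} {d p : ℤ}
    (h : OccursAtBi u (shiftBy d y) p) : OccursAtBi u y (p + d) := by
  intro k hk
  have := h k hk
  rwa [shiftBy_apply, show p + (k:ℤ) + d = p + d + k by ring] at this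

lemma XV_shiftBy {V : ℕ → Bool} {y : ℤ → Bool} (hy : y ∈ XV V) (d : ℤ) :
    shiftBy d y ∈ XV V := by
  rintro u ⟨p, hp⟩
  exact hy u ⟨p + d, occursBi_shiftBy hp⟩

lemma shift_image_XV (V : ℕ → Bool) : shift '' XV V = XV V := by
  ext y
  constructor
  · rintro ⟨w, hw, rfl⟩
    exact XV_shiftBy hw 1
  · intro hy
    refine ⟨shiftBy (-1) y, XV_shiftBy hy (-1), ?_⟩
    have h0 : (1 : ℤ) + -1 = 0 := by ring
    rw [shift_eq_shiftBy, shiftBy_shiftBy, h0, shiftBy_zero]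

lemma isClosed_XV (V : ℕ → Bool) : IsClosed (XV V) := by
  rw [← isOpen_compl_iff, isOpen_iff_forall_mem_open]
  intro x hx
  have hx' : ¬ ∀ u : Word, OccursInBi u x → OccursInInf u V := hx
  push_neg at hx'
  obtain ⟨u, ⟨p, hp⟩, hnV⟩ := hx'
  refine ⟨{y | ∀ j : ℕ, j < u.length → y (p + j) = x (p + j)}, ?_,
    isOpen_agreeR x p u.length, fun j hj => rfl⟩
  intro y hy
  have : ¬ ∀ u : Word, OccursInBi u y → OccursInInf u V := by
    push_neg
    exact ⟨u, ⟨p, fun k hk => (hp k hk).trans (hy k hk).symm⟩, hnV⟩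
  exact this

lemma getD_replicate_true {m k : ℕ} (hk : k < m) :
    (List.replicate m true).getD k false = true := by
  rw [List.getD_eq_getElem _ _ (by simpa using hk), List.getElem_replicate]

lemma getD_all_eq_replicate {u : Word} {bv : Bool}
    (h : ∀ k, k < u.length → u.getD k false = bv) : u = List.replicate u.length bv := by
  apply List.eq_replicate_of_mem
  intro b hb
  obtain ⟨k, hk, rfl⟩ := List.mem_iff_getElem.mp hb
  have := h k hk
  rwa [List.getD_eq_getElem u false hk] at this

lemma constTrue_mem {V : ℕ → Bool} (hA : ∀ m, OccursInInf (List.replicate m true) V) :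
    (fun _ => true : ℤ → Bool) ∈ XV V := by
  rintro u ⟨p, hp⟩
  rw [getD_all_eq_replicate (bv := true) (fun k hk => hp k hk)]
  exact hA u.length

lemma constFalse_mem {V : ℕ → Bool} (hA : ∀ m, OccursInInf (List.replicate m false) V) :
    (fun _ => false : ℤ → Bool) ∈ XV V := by
  rintro u ⟨p, hp⟩
  rw [getD_all_eq_replicate (bv := false) (fun k hk => hp k hk)]
  exact hA u.length

end XVStuff

section Deep

lemma deep_occurs {n : ℕ} (c : RankConstruction n) (hn : 1 ≤ n) (hpr : c.Proper)
    {V : ℕ → Bool} (hlim : c.HasLimit V) {w : Word} (hw : OccursInInf w V) :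
    ∀ R : ℕ, ∃ p : ℕ, R ≤ p ∧ OccursAtInf w V p := by
  intro R
  obtain ⟨iw, hiw⟩ := infix_W_of_occurs c hlim hw
  obtain ⟨i₀, hi₀⟩ := hlim.2 R
  have hR : R ≤ (c.wd (max i₀ (iw + 1)) 1).length :=
    le_trans hi₀ (lenW_mono c (le_max_left _ _))
  set i1 := max i₀ (iw + 1) with hi1
  have h1 : (1:ℕ) ≤ c.ni (i1+1) := c.ni_pos _
  have hfrom := c.bld_from i1 1 le_rfl h1
  have hword := c.bld_word i1 1 le_rfl h1
  rcases hb : (c.bld i1 1).pairs with _ | ⟨⟨v, s⟩, tl⟩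
  · exact absurd hb hfrom.1
  have hv : v = c.wd i1 1 := by
    have := c.bld_start i1; rwa [Building.firstPiece_eq hb] at this
  obtain ⟨p2, hp2mem, hp2pre⟩ := exists_prefix_piece (Building.mk tl (c.bld i1 1).last)
  have hp2S : p2 ∈ levelSet c.ni c.wd i1 := by
    apply hfrom.2
    rw [Building.pieces_eq hb]
    exact List.mem_cons_of_mem _ hp2mem
  obtain ⟨j2, hj21, hj22, hj23⟩ := level_mem c hpr hp2S
  have hii : iw < i1 := by omega
  have hwp2 : w <:+: p2 := by
    rw [← hj23]
    exact (hiw iw le_rfl).trans (chain_infix c hpr hii le_rfl hn hj21 hj22)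
  obtain ⟨r, hr⟩ := infix_occursAtFin (hwp2.trans hp2pre.isInfix)
  have hfin : OccursAtFin w (c.wd (i1+1) 1) ((v ++ spacer s).length + r) := by
    rw [← hword, Building.word_eq hb]
    exact occursAtFin_append_left hr
  refine ⟨(v ++ spacer s).length + r, ?_, occursFin_W c hlim hfin⟩
  have h5 : (c.wd i1 1).length ≤ (v ++ spacer s).length := by
    rw [List.length_append, hv]
    omega
  omega

lemma point_through {V : ℕ → Bool} {w : Word}
    (hdeep : ∀ R : ℕ, ∃ p : ℕ, R ≤ p ∧ OccursAtInf w V p) (c₀ : ℤ) :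
    ∃ y ∈ XV V, OccursAtBi w y c₀ := by
  classical
  choose pf hpf1 hpf2 using hdeep
  set yR : ℕ → (ℤ → Bool) := fun R k =>
    if h : 0 ≤ k - c₀ + pf R then V (k - c₀ + pf R).toNat else true with hyR
  have hval : ∀ (R : ℕ) (j : ℕ), yR R (c₀ + j) = V (pf R + j) := by
    intro R j
    have h0 : (0:ℤ) ≤ c₀ + j - c₀ + pf R := by omega
    rw [hyR]
    simp only
    rw [dif_pos h0]
    congr 1
    omega
  have hnb : Filter.NeBot (Filter.map yR Filter.atTop) := Filter.map_neBot
  obtain ⟨y, hy⟩ := exists_clusterPt_of_compactSpace (Filter.map yR Filter.atTop)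
  have hfreq : ∀ O : Set (ℤ → Bool), IsOpen O → y ∈ O → ∀ R₀ : ℕ,
      ∃ R, R₀ ≤ R ∧ yR R ∈ O := by
    intro O hO hyO R₀
    have h1 : O ∈ nhds y := hO.mem_nhds hyO
    have h2 : yR '' Set.Ici R₀ ∈ Filter.map yR Filter.atTop := by
      rw [Filter.mem_map]
      exact Filter.mem_of_superset (Filter.Ici_mem_atTop R₀)
        (fun R hR => Set.mem_image_of_mem _ hR)
    obtain ⟨v, hv1, hv2⟩ := clusterPt_iff_nonempty.mp hy h1 h2
    obtain ⟨R, hR1, rfl⟩ := hv2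
    exact ⟨R, hR1, hv1⟩
  refine ⟨y, ?_, ?_⟩
  · rintro u ⟨q, hq⟩
    obtain ⟨R, hR1, hR2⟩ := hfreq {v | ∀ j : ℕ, j < u.length → v (q + j) = y (q + j)}
      (isOpen_agreeR y q u.length) (fun j hj => rfl) (q.natAbs + c₀.natAbs)
    have hpfR : (q.natAbs + c₀.natAbs : ℕ) ≤ pf R := le_trans hR1 (hpf1 R)
    have hnn : (0:ℤ) ≤ q - c₀ + pf R := by omega
    refine ⟨(q - c₀ + pf R).toNat, fun k hk => ?_⟩
    have h5 := hq k hk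
    have h6 := hR2 k hk
    have h7 : yR R (q + k) = V ((q - c₀ + pf R).toNat + k) := by
      rw [hyR]
      simp only
      rw [dif_pos (by omega : (0:ℤ) ≤ q + k - c₀ + pf R)]
      congr 1
      omega
    rw [h5, ← h6, h7]
  · intro k hk
    by_contra hne
    obtain ⟨R, hR1, hR2⟩ := hfreq {v | v (c₀ + k) = y (c₀ + k)} (isOpen_coord _ _) rfl 0
    exact hne ((hpf2 R k hk).trans ((hval R k).symm.trans hR2))

end Deep

section Universal

lemma mem_closure_sorbit_of_windows {z x : ℤ → Bool}
    (h : ∀ P : ℕ, ∃ p : ℤ, OccursAtBi (winB z (-(P:ℤ)) (2*P+1)) x p) :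
    z ∈ closure (sorbit x) := by
  rw [mem_closure_iff]
  intro O hO hzO
  obtain ⟨P, hP⟩ := exists_agree_subset hO hzO
  obtain ⟨p, hp⟩ := h P
  refine ⟨shiftBy (p + P) x, hP _ ?_, ⟨p + P, rfl⟩⟩
  intro k hk
  have hk2 : (k + P).toNat < 2*P+1 := by omega
  have h3 := hp ((k + P).toNat) (by rw [winB_length]; exact hk2)
  rw [winB_getD _ _ _ hk2] at h3
  rw [shiftBy_apply]
  have harg1 : -(P:ℤ) + (((k + P).toNat : ℕ) : ℤ) = k := by omega
  have harg2 : p + (((k + P).toNat : ℕ) : ℤ) = k + (p + P) := by omega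
  rw [harg1, harg2] at h3
  exact h3.symm

/-- nonempty closed invariant subset -/
def NCI (X M : Set (ℤ → Bool)) : Prop :=
  M ⊆ X ∧ M.Nonempty ∧ IsClosed M ∧ shift '' M = M

lemma no_run_of_no_run {V : ℕ → Bool} {x : ℤ → Bool} (hx : x ∈ XV V) {m : ℕ}
    (hm : ¬ OccursInInf (List.replicate m true) V) :
    ¬ ∃ p, OccursAtBi (List.replicate m true) x p :=
  fun ⟨p, hp⟩ => hm (hx _ ⟨p, hp⟩)

lemma m_pos_of_not_occursV {V : ℕ → Bool} {m : ℕ}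
    (hm : ¬ OccursInInf (List.replicate m true) V) : 1 ≤ m := by
  by_contra h
  push_neg at h
  interval_cases m
  exact hm ⟨0, fun k hk => by simp at hk⟩

lemma caseB {n : ℕ} (c : RankConstruction n) (hn : 1 ≤ n) (hpr : c.Proper)
    {V : ℕ → Bool} (hlim : c.HasLimit V)
    (hB : ∃ m, ¬ OccursInInf (List.replicate m true) V) :
    ∀ x ∈ XV V, ∀ M, NCI (XV V) M → x ∈ M := by
  rintro x hx M ⟨hMX, ⟨y, hy⟩, hMc, hMi⟩
  obtain ⟨m, hm⟩ := hB
  have hm1 := m_pos_of_not_occursV hm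
  have hyX := hMX hy
  have hrun : ¬ ∃ p, OccursAtBi (List.replicate ((m-1) + 1) true) y p := by
    rw [show m - 1 + 1 = m by omega]
    exact no_run_of_no_run hyX hm
  have hkey := key_lemma c hn hpr hlim hyX (m-1) hrun
  have hcl : x ∈ closure (sorbit y) := by
    apply mem_closure_sorbit_of_windows
    intro P
    exact hkey _ (hx _ ⟨-(P:ℤ), occursAtBi_winB x _ _⟩)
  exact closure_minimal (sorbit_subset hMi hy) hMc hcl

lemma caseA {n : ℕ} (c : RankConstruction n) (hn : 1 ≤ n) (hpr : c.Proper)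
    {V : ℕ → Bool} (hlim : c.HasLimit V)
    (hA : ∀ m, OccursInInf (List.replicate m true) V) :
    ∀ M, NCI (XV V) M → (fun _ => true : ℤ → Bool) ∈ M := by
  rintro M ⟨hMX, ⟨y, hy⟩, hMc, hMi⟩
  have hyX := hMX hy
  have hwin : ∀ P : ℕ, ∃ p : ℤ, OccursAtBi (winB (fun _ => true) (-(P:ℤ)) (2*P+1)) y p := by
    intro P
    by_contra hno
    push_neg at hno
    have hrun : ¬ ∃ p, OccursAtBi (List.replicate (2*P + 1) true) y p := by
      rintro ⟨p, hp⟩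
      apply hno p
      intro k hk
      rw [winB_length] at hk
      rw [winB_getD _ _ _ hk]
      have h2 := hp k (by simpa using hk)
      rw [getD_replicate_true (by simpa using hk)] at h2
      exact h2
    obtain ⟨p, hp⟩ := key_lemma c hn hpr hlim hyX (2*P) hrun _ (hA (2*P+1))
    apply hno p
    intro k hk
    rw [winB_length] at hk
    rw [winB_getD _ _ _ hk]
    have h2 := hp k (by simpa using hk)
    rw [getD_replicate_true (by simpa using hk)] at h2
    exact h2
  have hcl : (fun _ => true : ℤ → Bool) ∈ closure (sorbit y) :=
    mem_closure_sorbit_of_windows hwin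
  exact closure_minimal (sorbit_subset hMi hy) hMc hcl

lemma exists_universal {n : ℕ} (c : RankConstruction n) (hn : 1 ≤ n) (hpr : c.Proper)
    {V : ℕ → Bool} (hlim : c.HasLimit V) (hne : (XV V).Nonempty) :
    ∃ z ∈ XV V, ∀ M, NCI (XV V) M → z ∈ M := by
  by_cases hA : ∀ m, OccursInInf (List.replicate m true) V
  · exact ⟨_, constTrue_mem hA, caseA c hn hpr hlim hA⟩
  · push_neg at hA
    obtain ⟨z, hz⟩ := hne
    exact ⟨z, hz, caseB c hn hpr hlim hA z hz⟩

end Universal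

section ZornSec

lemma exists_minimal_subset {X : Set (ℤ → Bool)} (hne : X.Nonempty) (hXc : IsClosed X)
    (hXi : shift '' X = X) : ∃ M, IsMinimalSubsetOf X M := by
  have hz := zorn_superset_nonempty {M : Set (ℤ → Bool) | NCI X M} ?_ X
    ⟨subset_rfl, hne, hXc, hXi⟩
  · obtain ⟨M, hMX, hmin⟩ := hz
    obtain ⟨hsub, hMne, hMc, hMi⟩ := hmin.1
    refine ⟨M, hMne, hMc, hsub, hMi, ?_⟩
    intro M' hM'M hM'ne hM'c hM'i
    have : M ⊆ M' := hmin.2 ⟨hM'M.trans hsub, hM'ne, hM'c, hM'i⟩ hM'M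
    exact le_antisymm hM'M this
  · intro ch hchS hch hchne
    refine ⟨⋂₀ ch, ?_, fun s hs => Set.sInter_subset_of_mem hs⟩
    have hInter : (⋂₀ ch).Nonempty := by
      haveI := hchne.to_subtype
      apply IsCompact.nonempty_sInter_of_directed_nonempty_isCompact_isClosed
      · intro a ha b hb
        rcases hch.total ha hb with h | h
        · exact ⟨a, ha, subset_rfl, h⟩
        · exact ⟨b, hb, h, subset_rfl⟩
      · exact fun U hU => (hchS hU).2.1
      · exact fun U hU => (hchS hU).2.2.1.isCompact
      · exact fun U hU => (hchS hU).2.2.1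
    refine ⟨?_, hInter, isClosed_sInter (fun U hU => (hchS hU).2.2.1), ?_⟩
    · obtain ⟨s, hs⟩ := hchne
      exact (Set.sInter_subset_of_mem hs).trans (hchS hs).1
    · apply Set.Subset.antisymm
      · rintro - ⟨w, hw, rfl⟩
        intro U hU
        rw [← (hchS hU).2.2.2]
        exact Set.mem_image_of_mem _ (hw U hU)
      · intro y hy
        refine ⟨shiftBy (-1) y, ?_, ?_⟩
        · intro U hU
          have hyU := hy U hU
          rw [← (hchS hU).2.2.2] at hyU
          obtain ⟨w, hw, rfl⟩ := hyU
          have h9 : shiftBy (-1) (shift w) = w := by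
            rw [shift_eq_shiftBy, shiftBy_shiftBy]
            norm_num [shiftBy_zero]
          rwa [h9]
        · rw [shift_eq_shiftBy, shiftBy_shiftBy]
          norm_num [shiftBy_zero]

lemma uniq_minimal {X : Set (ℤ → Bool)}
    (huniv : ∃ z ∈ X, ∀ M, NCI X M → z ∈ M) :
    ∀ M₁ M₂, IsMinimalSubsetOf X M₁ → IsMinimalSubsetOf X M₂ → M₁ = M₂ := by
  obtain ⟨z, hzX, hz⟩ := huniv
  intro M₁ M₂ h₁ h₂
  obtain ⟨h₁ne, h₁c, h₁X, h₁i, h₁min⟩ := h₁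
  obtain ⟨h₂ne, h₂c, h₂X, h₂i, h₂min⟩ := h₂
  have hz1 : z ∈ M₁ := hz M₁ ⟨h₁X, h₁ne, h₁c, h₁i⟩
  have hz2 : z ∈ M₂ := hz M₂ ⟨h₂X, h₂ne, h₂c, h₂i⟩
  have hC1 : closure (sorbit z) = M₁ :=
    h₁min _ (closure_minimal (sorbit_subset h₁i hz1) h₁c)
      ⟨z, subset_closure (mem_sorbit_self z)⟩ isClosed_closure (shift_image_closure_sorbit z)
  have hC2 : closure (sorbit z) = M₂ :=
    h₂min _ (closure_minimal (sorbit_subset h₂i hz2) h₂c)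
      ⟨z, subset_closure (mem_sorbit_self z)⟩ isClosed_closure (shift_image_closure_sorbit z)
  rw [← hC1, hC2]

end ZornSec

section PerfectSec

lemma preperfect_XV {n : ℕ} (c : RankConstruction n) (hn : 1 ≤ n) (hpr : c.Proper)
    {V : ℕ → Bool} (hlim : c.HasLimit V) (hinf : (XV V).Infinite)
    (huniv : ∃ z ∈ XV V, ∀ M, NCI (XV V) M → z ∈ M) :
    Preperfect (XV V) := by
  classical
  intro x hx
  rw [accPt_iff_nhds]
  intro U hU
  by_contra hcon
  push_neg at hcon
  obtain ⟨O, hOU, hO, hxO⟩ := mem_nhds_iff.mp hU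
  obtain ⟨P, hP⟩ := exists_agree_subset hO hxO
  set cyl := {y : ℤ → Bool | ∀ k : ℤ, k.natAbs ≤ P → y k = x k} with hcyl
  have hcylO : cyl ⊆ O := fun y hy => hP y hy
  have hcylsingle : ∀ y, y ∈ cyl → y ∈ XV V → y = x := by
    intro y hy hyX
    exact hcon y ⟨hOU (hcylO hy), hyX⟩
  set u := winB x (-(P:ℤ)) (2*P+1) with hu
  have hxu : OccursAtBi u x (-(P:ℤ)) := occursAtBi_winB x _ _
  have huV : OccursInInf u V := hx u ⟨_, hxu⟩
  have hcylof : ∀ y : ℤ → Bool, OccursAtBi u y (-(P:ℤ)) → y ∈ cyl := by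
    intro y hy k hk
    have hk2 : (k + P).toNat < 2*P+1 := by omega
    have h3 := hy ((k + P).toNat) (by rw [hu, winB_length]; exact hk2)
    rw [hu, winB_getD _ _ _ hk2] at h3
    have harg1 : -(P:ℤ) + (((k + P).toNat : ℕ) : ℤ) = k := by omega
    rw [harg1] at h3
    exact h3.symm
  obtain ⟨iw, hiw⟩ := infix_W_of_occurs c hlim huV
  obtain ⟨q1, hq1pre⟩ := infix_occursAtFin (hiw (iw+1) (by omega))
  have hq1 : OccursAtFin u (c.wd (iw+2) 1) q1 :=
    occursAtFin_of_prefix hq1pre (prefix_W c (iw+1))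
  have hq1le : q1 + u.length ≤ (c.wd (iw+1) 1).length := hq1pre.1
  have h1 : (1:ℕ) ≤ c.ni (iw+1+1) := c.ni_pos _
  have hfrom := c.bld_from (iw+1) 1 le_rfl h1
  have hword := c.bld_word (iw+1) 1 le_rfl h1
  rcases hb : (c.bld (iw+1) 1).pairs with _ | ⟨⟨v, s⟩, tl⟩
  · exact absurd hb hfrom.1
  have hv : v = c.wd (iw+1) 1 := by
    have := c.bld_start (iw+1); rwa [Building.firstPiece_eq hb] at this
  obtain ⟨p2, hp2mem, hp2pre⟩ := exists_prefix_piece (Building.mk tl (c.bld (iw+1) 1).last)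
  have hp2S : p2 ∈ levelSet c.ni c.wd (iw+1) := by
    apply hfrom.2
    rw [Building.pieces_eq hb]
    exact List.mem_cons_of_mem _ hp2mem
  obtain ⟨j2, hj21, hj22, hj23⟩ := level_mem c hpr hp2S
  have hup2 : u <:+: p2 := by
    rw [← hj23]
    exact (hiw iw le_rfl).trans (chain_infix c hpr (by omega) le_rfl hn hj21 hj22)
  obtain ⟨r, hr⟩ := infix_occursAtFin (hup2.trans hp2pre.isInfix)
  have hq2 : OccursAtFin u (c.wd (iw+2) 1) ((v ++ spacer s).length + r) := by
    rw [show iw + 2 = iw + 1 + 1 from rfl, ← hword, Building.word_eq hb]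
    exact occursAtFin_append_left hr
  set q2 := (v ++ spacer s).length + r with hq2def
  have hq1q2 : q1 + u.length ≤ q2 := by
    have h5 : (c.wd (iw+1) 1).length ≤ (v ++ spacer s).length := by
      rw [List.length_append, hv]; omega
    omega
  have hulen : u.length = 2*P+1 := by rw [hu, winB_length]
  have hTV : OccursInInf (c.wd (iw+2) 1) V := W_occurs c hlim (iw+2)
  obtain ⟨y, hyX, hyT⟩ := point_through (deep_occurs c hn hpr hlim hTV) (-(P:ℤ) - q1)
  have hyu1 : OccursAtBi u y (-(P:ℤ)) := by
    have h6 := occursBi_of_fin hyT hq1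
    rwa [show -(P:ℤ) - q1 + q1 = -(P:ℤ) by ring] at h6
  have hyx : y = x := hcylsingle y (hcylof y hyu1) hyX
  have hyu2 : OccursAtBi u x (-(P:ℤ) - q1 + q2) := by
    rw [← hyx]
    exact occursBi_of_fin hyT hq2
  set d : ℤ := (q2 : ℤ) - q1 with hd
  have hd1 : 1 ≤ d := by
    have h7 : 1 ≤ u.length := by omega
    omega
  have hsx : shiftBy d x ∈ cyl := by
    apply hcylof
    intro k hk
    have h8 := hyu2 k hk
    rw [shiftBy_apply]
    rw [h8]
    congr 1
    rw [hd]; ring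
  have hshift_eq : shiftBy d x = x := hcylsingle _ hsx (XV_shiftBy hx d)
  have hper : ∀ a : ℤ, x (a + d) = x a := fun a => congrFun hshift_eq a
  have hmul : ∀ (q : ℤ) (a : ℤ), x (a + d * q) = x a := by
    intro q
    induction q using Int.induction_on with
    | zero => intro a; rw [mul_zero, add_zero]
    | succ k ih =>
      intro a
      have h6 : a + d * ((k:ℤ) + 1) = (a + d * k) + d := by ring
      rw [h6, hper, ih]
    | pred k ih =>
      intro a
      have h6 := hper (a + d * (-(k:ℤ) - 1))
      have h7 : a + d * (-(k:ℤ) - 1) + d = a + d * (-(k:ℤ)) := by ring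
      rw [h7] at h6
      rw [← h6]
      exact ih a
  have hg : ∀ nn : ℤ, shiftBy nn x = shiftBy (nn % d) x := by
    intro nn
    funext k
    rw [shiftBy_apply, shiftBy_apply]
    have h8 : k + nn = (k + nn % d) + d * (nn / d) := by
      have h9 := Int.mul_ediv_add_emod nn d
      linarith
    rw [h8, hmul]
  have hfin : (sorbit x).Finite := by
    have hsub : sorbit x ⊆ (fun nn : ℤ => shiftBy nn x) '' (Set.Icc 0 (d-1)) := by
      rintro - ⟨nn, rfl⟩
      refine ⟨nn % d, ?_, (hg nn).symm⟩
      refine ⟨Int.emod_nonneg nn (by omega), ?_⟩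
      have := Int.emod_lt_of_pos nn (show 0 < d by omega)
      omega
    exact ((Set.finite_Icc _ _).image _).subset hsub
  obtain ⟨z, hzX, hz⟩ := huniv
  have hNCIorb : NCI (XV V) (sorbit x) :=
    ⟨sorbit_subset (shift_image_XV V) hx, ⟨x, mem_sorbit_self x⟩, hfin.isClosed,
      shift_image_sorbit x⟩
  have hzorb : z ∈ sorbit x := hz _ hNCIorb
  have hcylopen : IsOpen cyl := by
    have h9 : cyl = {y : ℤ → Bool | ∀ k ∈ Finset.Icc (-(P:ℤ)) (P:ℤ), y k = x k} := by
      ext y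
      constructor
      · intro hy k hk
        rw [Finset.mem_Icc] at hk
        exact hy k (by omega)
      · intro hy k hk
        exact hy k (Finset.mem_Icc.mpr (by omega))
    rw [h9]
    exact isOpen_agreeF x _
  have hiso : ∀ w ∈ sorbit x, ∃ Uw : Set (ℤ → Bool), IsOpen Uw ∧ Uw ∩ XV V = {w} := by
    rintro - ⟨mm, rfl⟩
    refine ⟨(shiftBy mm) '' cyl, (Homeomorph.isOpen_image _).mpr hcylopen, ?_⟩
    apply Set.Subset.antisymm
    · rintro w ⟨⟨yc, hyc, rfl⟩, hwX⟩
      have hycX : yc ∈ XV V := by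
        have h9 : yc = shiftBy (-mm) (shiftBy mm yc) := by
          rw [shiftBy_shiftBy]
          norm_num [shiftBy_zero]
        rw [h9]
        exact XV_shiftBy hwX (-mm)
      rw [hcylsingle yc hyc hycX]
      exact Set.mem_singleton_iff.mpr rfl
    · intro w hw
      rw [Set.mem_singleton_iff] at hw
      subst hw
      exact ⟨⟨x, fun k hk => rfl, rfl⟩, XV_shiftBy hx mm⟩
  choose! Uw hUopen hUeq using hiso
  have hdiffclosed : IsClosed (XV V \ sorbit x) := by
    have heq : XV V \ sorbit x = XV V ∩ (⋃ w ∈ sorbit x, Uw w)ᶜ := by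
      apply Set.Subset.antisymm
      · rintro y ⟨hyX, hyO⟩
        refine ⟨hyX, fun hyU => ?_⟩
        simp only [Set.mem_iUnion] at hyU
        obtain ⟨w, hw, hyw⟩ := hyU
        have h10 : y ∈ Uw w ∩ XV V := ⟨hyw, hyX⟩
        rw [hUeq w hw, Set.mem_singleton_iff] at h10
        rw [← h10] at hw
        exact hyO hw
      · rintro y ⟨hyX, hyU⟩
        refine ⟨hyX, fun hyO => ?_⟩
        apply hyU
        simp only [Set.mem_iUnion]
        refine ⟨y, hyO, ?_⟩
        have h10 : y ∈ Uw y ∩ XV V := by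
          rw [hUeq y hyO]
          exact rfl
        exact h10.1
    rw [heq]
    exact (isClosed_XV V).inter
      (isOpen_iUnion fun w => isOpen_iUnion fun hw => hUopen w hw).isClosed_compl
  have hNCIdiff : NCI (XV V) (XV V \ sorbit x) := by
    refine ⟨Set.diff_subset, (hinf.diff hfin).nonempty, hdiffclosed, ?_⟩
    have hinj : Function.Injective shift := (shiftBy 1).injective
    rw [Set.image_diff hinj, shift_image_XV, shift_image_sorbit]
  have hzdiff : z ∈ XV V \ sorbit x := hz _ hNCIdiff
  exact hzdiff.2 hzorb

end PerfectSec

/-- Corollary 4.2. An infinite subshift of symbolic rank `≤ n` generated by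
a word with a proper rank-`n` construction is an essentially minimal Cantor system; in
particular some `0^k` is not a subword of `V`. -/
theorem statement_7 (n : ℕ) (hn : 1 ≤ n) (V : ℕ → Bool) (X : Set (ℤ → Bool))
    (hX : X = XV V) (hinf : X.Infinite) (hrank : SymbRankLE X n)
    (c : RankConstruction n) (hlim : c.HasLimit V) (hproper : c.Proper) :
    Perfect X ∧ (∃! M : Set (ℤ → Bool), IsMinimalSubsetOf X M) ∧
      ∃ k : ℕ, ¬ OccursInInf (List.replicate k false) V := by
  subst hX
  have hne : (XV V).Nonempty := hinf.nonempty
  have huniv := exists_universal c hn hproper hlim hne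
  refine ⟨⟨isClosed_XV V, preperfect_XV c hn hproper hlim hinf huniv⟩, ?_, ?_⟩
  · obtain ⟨M, hM⟩ := exists_minimal_subset hne (isClosed_XV V) (shift_image_XV V)
    exact ⟨M, hM, fun M' hM' => uniq_minimal huniv M' M hM' hM⟩
  · by_contra hk
    push_neg at hk
    have hF : (fun _ => false : ℤ → Bool) ∈ XV V := constFalse_mem hk
    have hNCI : NCI (XV V) {fun _ => false} := by
      refine ⟨Set.singleton_subset_iff.mpr hF, Set.singleton_nonempty _,
        isClosed_singleton, ?_⟩
      rw [Set.image_singleton]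
      have h0 : shift (fun _ => false : ℤ → Bool) = (fun _ => false : ℤ → Bool) := rfl
      rw [h0]
    by_cases hA : ∀ m, OccursInInf (List.replicate m true) V
    · have h1 := caseA c hn hproper hlim hA _ hNCI
      rw [Set.mem_singleton_iff] at h1
      exact absurd (congrFun h1 0) (by simp)
    · push_neg at hA
      have hall := caseB c hn hproper hlim hA
      have hsub : XV V ⊆ {fun _ => false} := fun x hx => hall x hx _ hNCI
      exact hinf ((Set.finite_singleton _).subset hsub)

end SubshiftRank
end

section
/- There exists a rank-1 word V such that the subshift X_V is not minimal and (X_V, σ) does not have finite topological rank, i.e. for no m ≥ 1 does the essentially minimal Cantor system (X_V, σ) have topological rank at most m. -/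
namespace SubshiftRank

def cc (n : ℕ) : ℕ := 2 * (Nat.unpair n).1 + 1

def vW : ℕ → List Bool
  | 0 => [false]
  | n+1 => vW n ++ List.replicate (cc n) true ++ vW n ++
      List.replicate (2 * ((vW n).length + cc n + 1)) true ++ vW n

def LL (n : ℕ) : ℕ := (vW n).length
def ss (n : ℕ) : ℕ := 2 * (LL n + cc n + 1)

def VV (k : ℕ) : Bool := (vW (k+1)).getD k false

lemma cc_odd (n : ℕ) : Odd (cc n) := Nat.odd_iff.mpr (by simp [cc])

lemma cc_pos (n : ℕ) : 1 ≤ cc n := by simp [cc]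

lemma ss_even (n : ℕ) : Even (ss n) := Nat.even_iff.mpr (by unfold ss; omega)

lemma cc_lt_ss (n : ℕ) : cc n < ss n := by simp [ss]; omega

lemma rep_getD (b d : Bool) {k n : ℕ} (h : k < n) : (List.replicate n b).getD k d = b := by
  rw [List.getD_eq_getElem?_getD]
  simp [List.getElem?_replicate, h]

lemma vW_succ (n : ℕ) : vW (n+1) = vW n ++ (List.replicate (cc n) true ++ (vW n ++
    (List.replicate (ss n) true ++ vW n))) := by
  simp [vW, ss, LL, List.append_assoc]

lemma LL_zero : LL 0 = 1 := rfl

lemma LL_succ (n : ℕ) : LL (n+1) = LL n + (cc n + (LL n + (ss n + LL n))) := by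
  rw [LL, vW_succ]; simp [LL]

lemma LL_ge (n : ℕ) : n + 1 ≤ LL n := by
  induction n with
  | zero => simp [LL_zero]
  | succ n ih => have := LL_succ n; have := cc_pos n; omega

lemma LL_pos (n : ℕ) : 1 ≤ LL n := le_trans (by omega) (LL_ge n)

lemma vW_prefix (n : ℕ) : vW n <+: vW (n+1) := by
  rw [vW_succ]; exact List.prefix_append _ _

lemma vW_prefix_le {n m : ℕ} (h : n ≤ m) : vW n <+: vW m := by
  induction m with
  | zero => cases Nat.le_zero.mp h; exact List.prefix_refl _
  | succ m ih =>
    rcases Nat.lt_or_ge n (m+1) with h' | h'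
    · exact (ih (by omega)).trans (vW_prefix m)
    · have : n = m + 1 := by omega
      subst this; exact List.prefix_refl _

lemma getD_of_prefix {l₁ l₂ : List Bool} (h : l₁ <+: l₂) {k : ℕ} (hk : k < l₁.length) :
    l₂.getD k false = l₁.getD k false := by
  obtain ⟨t, rfl⟩ := h
  exact List.getD_append _ _ _ _ hk

lemma VV_eq_vW {n k : ℕ} (hk : k < LL n) : VV k = (vW n).getD k false := by
  unfold VV
  rcases Nat.le_total (k+1) n with h | h
  · rw [getD_of_prefix (vW_prefix_le h)
      (show k < (vW (k+1)).length from lt_of_lt_of_le (by omega) (LL_ge (k+1)))]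
  · rw [getD_of_prefix (vW_prefix_le h) hk]

lemma vW_succ_getD (n k : ℕ) (hk : k < LL (n+1)) :
    VV k = (vW n ++ (List.replicate (cc n) true ++ (vW n ++
    (List.replicate (ss n) true ++ vW n)))).getD k false := by
  rw [VV_eq_vW hk, vW_succ]

/-- spacer 1: `VV (L n + i) = true` for `i < cc n` -/
lemma seg_c (n i : ℕ) (hi : i < cc n) : VV (LL n + i) = true := by
  rw [vW_succ_getD n _ (by have := LL_succ n; omega)]
  rw [List.getD_append_right _ _ _ _ (by simp only [LL]; omega)]
  rw [show LL n + i - (vW n).length = i from by simp only [LL]; omega]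
  rw [List.getD_append _ _ _ _ (by simp [hi])]
  exact rep_getD _ _ hi

/-- copy 2: `VV (L n + cc n + i) = VV i` for `i < L n` -/
lemma seg_copy2 (n i : ℕ) (hi : i < LL n) : VV (LL n + cc n + i) = VV i := by
  rw [vW_succ_getD n _ (by have := LL_succ n; omega)]
  rw [List.getD_append_right _ _ _ _ (by simp only [LL]; omega)]
  rw [show LL n + cc n + i - (vW n).length = cc n + i from by simp only [LL]; omega]
  rw [List.getD_append_right _ _ _ _ (by simp)]
  simp only [List.length_replicate]
  rw [show cc n + i - cc n = i from by omega]
  rw [List.getD_append _ _ _ _ (show i < (vW n).length from hi)]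
  exact (VV_eq_vW hi).symm

/-- spacer 2: `VV (2 L n + cc n + i) = true` for `i < ss n` -/
lemma seg_s (n i : ℕ) (hi : i < ss n) : VV (2 * LL n + cc n + i) = true := by
  rw [vW_succ_getD n _ (by have := LL_succ n; omega)]
  rw [List.getD_append_right _ _ _ _ (by simp only [LL]; omega)]
  rw [show 2 * LL n + cc n + i - (vW n).length = LL n + cc n + i from by simp only [LL]; omega]
  rw [List.getD_append_right _ _ _ _ (by simp only [List.length_replicate]; omega)]
  simp only [List.length_replicate]
  rw [show LL n + cc n + i - cc n = LL n + i from by omega]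
  rw [List.getD_append_right _ _ _ _ (by simp only [LL]; omega)]
  rw [show LL n + i - (vW n).length = i from by simp only [LL]; omega]
  rw [List.getD_append _ _ _ _ (by simp [hi])]
  exact rep_getD _ _ hi

/-- copy 3: `VV (2 L n + cc n + ss n + i) = VV i` for `i < L n` -/
lemma seg_copy3 (n i : ℕ) (hi : i < LL n) : VV (2 * LL n + cc n + ss n + i) = VV i := by
  rw [vW_succ_getD n _ (by have := LL_succ n; omega)]
  rw [List.getD_append_right _ _ _ _ (by simp only [LL]; omega)]
  rw [show 2 * LL n + cc n + ss n + i - (vW n).length = LL n + cc n + ss n + i from by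
    simp only [LL]; omega]
  rw [List.getD_append_right _ _ _ _ (by simp only [List.length_replicate]; omega)]
  simp only [List.length_replicate]
  rw [show LL n + cc n + ss n + i - cc n = LL n + ss n + i from by omega]
  rw [List.getD_append_right _ _ _ _ (by simp only [LL]; omega)]
  rw [show LL n + ss n + i - (vW n).length = ss n + i from by simp only [LL]; omega]
  rw [List.getD_append_right _ _ _ _ (by simp only [List.length_replicate]; omega)]
  simp only [List.length_replicate]
  rw [show ss n + i - ss n = i from by omega]
  exact (VV_eq_vW hi).symm

lemma VV_zero : VV 0 = false := rfl

lemma VV_last (n : ℕ) : VV (LL n - 1) = false := by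
  induction n with
  | zero => simpa [LL_zero] using VV_zero
  | succ n ih =>
    have h1 := LL_pos n
    have : LL (n+1) - 1 = 2 * LL n + cc n + ss n + (LL n - 1) := by
      have := LL_succ n; omega
    rw [this, seg_copy3 n _ (by omega)]
    exact ih



/-! ### The junction lemma -/

/-- classification of zero positions in `v_{n+1}` -/
lemma zeroLoc {n x : ℕ} (hx : x < LL (n+1)) (h0 : VV x = false) :
    x < LL n ∨ (LL n + cc n ≤ x ∧ x < 2 * LL n + cc n) ∨ 2 * LL n + cc n + ss n ≤ x := by
  by_contra hcon
  push_neg at hcon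
  obtain ⟨h1, h2, h3⟩ := hcon
  rcases Nat.lt_or_ge x (LL n + cc n) with h4 | h4
  · -- in spacer 1
    have := seg_c n (x - LL n) (by omega)
    rw [show LL n + (x - LL n) = x from by omega] at this
    simp [this] at h0
  · -- in spacer 2
    have h5 : 2 * LL n + cc n ≤ x := h2 h4
    have := seg_s n (x - (2 * LL n + cc n)) (by omega)
    rw [show 2 * LL n + cc n + (x - (2 * LL n + cc n)) = x from by omega] at this
    simp [this] at h0

/-- **Junction lemma**: every maximal run of odd length `r` inside `v_n` is a junction
of some level `m̃` with `c(m̃) = r`; consequently the content `ℓ + r` after it (with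
`ℓ = |v_{m̃}|`) disagrees with the prefix of `V`. -/
lemma lemJ : ∀ n q r, Odd r → 1 ≤ q → q + r < LL n → VV (q-1) = false →
    (∀ i, i < r → VV (q+i) = true) → VV (q+r) = false →
    ∃ ℓ, 1 ≤ ℓ ∧ VV (ℓ + r) = false ∧ VV (q + r + ℓ + r) = true ∧ q + r + ℓ + r < LL n := by
  intro n
  induction n with
  | zero =>
    intro q r hodd hq hqr _ _ _
    have : 1 ≤ r := hodd.pos
    simp [LL_zero] at hqr; omega
  | succ n ih =>
    intro q r hodd hq hqr hz1 hrun hz2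
    have hrpos : 1 ≤ r := hodd.pos
    have hA := LL_pos n
    have hE := LL_succ n
    have hccss := cc_lt_ss n
    have hcp := cc_pos n
    have hc1 := zeroLoc (show q - 1 < LL (n+1) from by omega) hz1
    have hc2 := zeroLoc (show q + r < LL (n+1) from by omega) hz2
    -- useful zero values
    have hVB : VV (LL n + cc n) = false := by
      have := seg_copy2 n 0 (by omega); simpa [VV_zero] using this
    have hVD : VV (2 * LL n + cc n + ss n) = false := by
      have := seg_copy3 n 0 (by omega); simpa [VV_zero] using this
    have hVA1 : VV (LL n - 1) = false := VV_last n
    have hVC1 : VV (2 * LL n + cc n - 1) = false := by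
      have := seg_copy2 n (LL n - 1) (by omega)
      rw [show LL n + cc n + (LL n - 1) = 2 * LL n + cc n - 1 from by omega] at this
      rw [this]; exact VV_last n
    rcases hc1 with h1 | h1 | h1
    · -- q - 1 in copy 1
      rcases hc2 with h2 | h2 | h2
      · -- both in copy 1 : induction
        obtain ⟨ℓ, hl1, hl2, hl3, hl4⟩ := ih q r hodd hq h2 hz1 hrun hz2
        exact ⟨ℓ, hl1, hl2, hl3, by omega⟩
      · -- junction case: q = L n, q + r = L n + cc n
        have hqA : q = LL n := by
          by_contra hne
          have hqlt : q < LL n := by omega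
          have : VV (q + (LL n - 1 - q)) = true := hrun _ (by omega)
          rw [show q + (LL n - 1 - q) = LL n - 1 from by omega] at this
          simp [hVA1] at this
        have hqrB : q + r = LL n + cc n := by
          rcases Nat.lt_trichotomy (q + r) (LL n + cc n) with h | h | h
          · have := seg_c n (q + r - LL n) (by omega)
            rw [show LL n + (q + r - LL n) = q + r from by omega] at this
            simp [this] at hz2
          · exact h
          · have : VV (q + (LL n + cc n - q)) = true := hrun _ (by omega)
            rw [show q + (LL n + cc n - q) = LL n + cc n from by omega] at this
            simp [hVB] at this
        have hrc : r = cc n := by omega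
        refine ⟨LL n, by omega, ?_, ?_, by omega⟩
        · rw [show LL n + r = LL n + cc n from by omega]; exact hVB
        · rw [show q + r + LL n + r = 2 * LL n + cc n + cc n from by omega]
          exact seg_s n (cc n) (by omega)
      · -- q - 1 in copy 1, q + r in copy 3 : impossible (B inside the run)
        exfalso
        have : VV (q + (LL n + cc n - q)) = true := hrun _ (by omega)
        rw [show q + (LL n + cc n - q) = LL n + cc n from by omega] at this
        simp [hVB] at this
    · -- q - 1 in copy 2
      rcases hc2 with h2 | h2 | h2
      · omega
      · -- both in copy 2 : induction, translated
        have hq' : 1 ≤ q - (LL n + cc n) := by omega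
        set q' := q - (LL n + cc n) with hq'def
        have e1 : VV (q' - 1) = false := by
          have := seg_copy2 n (q' - 1) (by omega)
          rw [show LL n + cc n + (q' - 1) = q - 1 from by omega] at this
          rw [← this]; exact hz1
        have e2 : ∀ i, i < r → VV (q' + i) = true := by
          intro i hi
          have := seg_copy2 n (q' + i) (by omega)
          rw [show LL n + cc n + (q' + i) = q + i from by omega] at this
          rw [← this]; exact hrun i hi
        have e3 : VV (q' + r) = false := by
          have := seg_copy2 n (q' + r) (by omega)
          rw [show LL n + cc n + (q' + r) = q + r from by omega] at this
          rw [← this]; exact hz2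
        obtain ⟨ℓ, hl1, hl2, hl3, hl4⟩ := ih q' r hodd hq' (by omega) e1 e2 e3
        refine ⟨ℓ, hl1, hl2, ?_, by omega⟩
        have := seg_copy2 n (q' + r + ℓ + r) (by omega)
        rw [show LL n + cc n + (q' + r + ℓ + r) = q + r + ℓ + r from by omega] at this
        rw [this]; exact hl3
      · -- q - 1 in copy 2, q + r in copy 3 : run is the even spacer, contradiction
        exfalso
        have hqC : q = 2 * LL n + cc n := by
          by_contra hne
          have : VV (q + (2 * LL n + cc n - 1 - q)) = true := hrun _ (by omega)
          rw [show q + (2 * LL n + cc n - 1 - q) = 2 * LL n + cc n - 1 from by omega] at this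
          simp [hVC1] at this
        have hqrD : q + r = 2 * LL n + cc n + ss n := by
          rcases Nat.lt_trichotomy (q + r) (2 * LL n + cc n + ss n) with h | h | h
          · have := seg_s n (q + r - (2 * LL n + cc n)) (by omega)
            rw [show 2 * LL n + cc n + (q + r - (2 * LL n + cc n)) = q + r from by omega] at this
            simp [this] at hz2
          · exact h
          · have : VV (q + (2 * LL n + cc n + ss n - q)) = true := hrun _ (by omega)
            rw [show q + (2 * LL n + cc n + ss n - q) = 2 * LL n + cc n + ss n from by omega]
              at this
            simp [hVD] at this
        have : r = ss n := by omega
        rw [this] at hodd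
        exact (Nat.not_odd_iff_even.mpr (ss_even n)) hodd
    · -- q - 1 in copy 3
      have h2 : q + r < LL (n+1) := hqr
      have hD : 2 * LL n + cc n + ss n + 1 ≤ q := by omega
      have hq' : 1 ≤ q - (2 * LL n + cc n + ss n) := by omega
      set q' := q - (2 * LL n + cc n + ss n) with hq'def
      have e1 : VV (q' - 1) = false := by
        have := seg_copy3 n (q' - 1) (by omega)
        rw [show 2 * LL n + cc n + ss n + (q' - 1) = q - 1 from by omega] at this
        rw [← this]; exact hz1
      have e2 : ∀ i, i < r → VV (q' + i) = true := by
        intro i hi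
        have := seg_copy3 n (q' + i) (by omega)
        rw [show 2 * LL n + cc n + ss n + (q' + i) = q + i from by omega] at this
        rw [← this]; exact hrun i hi
      have e3 : VV (q' + r) = false := by
        have := seg_copy3 n (q' + r) (by omega)
        rw [show 2 * LL n + cc n + ss n + (q' + r) = q + r from by omega] at this
        rw [← this]; exact hz2
      obtain ⟨ℓ, hl1, hl2, hl3, hl4⟩ := ih q' r hodd hq' (by omega) e1 e2 e3
      refine ⟨ℓ, hl1, hl2, ?_, by omega⟩
      have := seg_copy3 n (q' + r + ℓ + r) (by omega)
      rw [show 2 * LL n + cc n + ss n + (q' + r + ℓ + r) = q + r + ℓ + r from by omega] at this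
      rw [this]; exact hl3

/-! ### Points of the subshift -/

/-- `V` as a bi-infinite point, with the level-`M` junction at the origin:
`yPt M = 1^∞ · v_M · 1^{c_M} · v_M · 1^{s_M} ⋯` with the run `1^{c_M}` at `[0, c_M)`. -/
noncomputable def yPt (M : ℕ) : ℤ → Bool :=
  fun t => if 0 ≤ t + (LL M : ℤ) then VV (t + LL M).toNat else true

lemma yPt_val (M : ℕ) {t : ℤ} (h : -(LL M : ℤ) ≤ t) :
    yPt M t = VV (t + LL M).toNat := if_pos (by omega)

lemma yPt_val_neg (M : ℕ) {t : ℤ} (h : t + (LL M : ℤ) < 0) : yPt M t = true := if_neg (by omega)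

lemma yPt_neg1 (M : ℕ) : yPt M (-1) = false := by
  have h1 := LL_pos M
  rw [yPt_val M (by omega : -(LL M : ℤ) ≤ -1)]
  rw [show ((-1 : ℤ) + LL M).toNat = LL M - 1 from by omega]
  exact VV_last M

lemma yPt_run (M : ℕ) {u : ℕ} (hu : u < cc M) : yPt M u = true := by
  rw [yPt_val M (by omega : -(LL M : ℤ) ≤ (u : ℤ))]
  rw [show ((u : ℤ) + LL M).toNat = LL M + u from by omega]
  exact seg_c M u hu

lemma yPt_cc (M : ℕ) : yPt M (cc M) = false := by
  rw [yPt_val M (by omega : -(LL M : ℤ) ≤ (cc M : ℤ))]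
  rw [show ((cc M : ℤ) + LL M).toNat = LL M + cc M + 0 from by omega]
  rw [seg_copy2 M 0 (LL_pos M)]
  exact VV_zero

lemma yPt_after (M : ℕ) {u : ℕ} (hu : u < LL M) : yPt M ((cc M : ℤ) + u) = VV u := by
  rw [yPt_val M (by omega : -(LL M : ℤ) ≤ (cc M : ℤ) + u)]
  rw [show ((cc M : ℤ) + u + LL M).toNat = LL M + cc M + u from by omega]
  exact seg_copy2 M u hu

/-- in `V` one finds `1^a` followed by the prefix of `V` of length `d`, anywhere deep enough -/
lemma ones_then_prefix (a d : ℕ) : ∃ π : ℕ,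
    (∀ k, k < a → VV (π + k) = true) ∧ (∀ k, k < d → VV (π + a + k) = VV k) := by
  set n := a + d with hn
  have h1 := LL_ge n
  have hss : a ≤ ss n := by unfold ss; omega
  refine ⟨2 * LL n + cc n + (ss n - a), ?_, ?_⟩
  · intro k hk
    rw [show 2 * LL n + cc n + (ss n - a) + k = 2 * LL n + cc n + ((ss n - a) + k) from by ring]
    exact seg_s n _ (by omega)
  · intro k hk
    rw [show 2 * LL n + cc n + (ss n - a) + a + k = 2 * LL n + cc n + ss n + k from by omega]
    exact seg_copy3 n k (by omega)

lemma ones_mem : (fun _ : ℤ => true) ∈ XV VV := by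
  intro u hu
  obtain ⟨p, hp⟩ := hu
  obtain ⟨π, h1, _⟩ := ones_then_prefix u.length 0
  exact ⟨π, fun k hk => (hp k hk).trans (h1 k hk).symm⟩

lemma yPt_mem (M : ℕ) : yPt M ∈ XV VV := by
  intro u hu
  obtain ⟨p, hp⟩ := hu
  rcases le_or_gt 0 (p + (LL M : ℤ)) with hple | hplt
  · refine ⟨(p + LL M).toNat, fun k hk => ?_⟩
    rw [hp k hk, yPt_val M (by omega : -(LL M : ℤ) ≤ p + k)]
    congr 1
    omega
  · set a := (-(p + (LL M : ℤ))).toNat with ha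
    obtain ⟨π, h1, h2⟩ := ones_then_prefix a u.length
    refine ⟨π, fun k hk => ?_⟩
    rw [hp k hk]
    rcases lt_or_ge k a with hka | hka
    · rw [yPt_val_neg M (by omega : p + (k : ℤ) + LL M < 0)]
      exact (h1 k hka).symm
    · rw [yPt_val M (by omega : -(LL M : ℤ) ≤ p + k)]
      rw [show (p + (k : ℤ) + LL M).toNat = k - a from by omega]
      have h4 := h2 (k - a) (by omega)
      rw [show π + a + (k - a) = π + k from by omega] at h4
      exact h4.symm


/-! ### Shift basics -/

lemma shift_iterate (j : ℕ) (y : ℤ → Bool) (k : ℤ) : (shift^[j] y) k = y (k + j) := by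
  induction j generalizing k with
  | zero => simp
  | succ j ih =>
    rw [Function.iterate_succ_apply']
    show (shift^[j] y) (k + 1) = y (k + (j + 1 : ℕ))
    rw [ih]
    congr 1
    push_cast
    ring

/-- the two-sided shift by `t` -/
def zsh (y : ℤ → Bool) (t : ℤ) : ℤ → Bool := fun k => y (k + t)

lemma zsh_memXV {y : ℤ → Bool} (hy : y ∈ XV VV) (t : ℤ) : zsh y t ∈ XV VV := by
  intro u hu
  obtain ⟨p, hp⟩ := hu
  refine hy u ⟨p + t, fun k hk => ?_⟩
  rw [hp k hk]
  show y (p + k + t) = y (p + t + k)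
  congr 1
  ring

lemma ones_in_base (P : KRPartOn (XV VV)) : (fun _ : ℤ => true) ∈ P.base := by
  have hX : (fun _ : ℤ => true) ∈
      (⋃ k, ⋃ j ∈ Finset.range (P.h k), shift^[j] '' P.B k) := by
    rw [P.cover]; exact ones_mem
  simp only [Set.mem_iUnion, Finset.mem_range] at hX
  obtain ⟨k, j, hj, b, hb, hbe⟩ := hX
  have hbones : b = fun _ : ℤ => true := by
    funext i
    have h1 := congrFun hbe (i - j)
    rw [shift_iterate] at h1
    rw [show i - (j : ℤ) + j = i from by ring] at h1
    exact h1
  rw [hbones] at hb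
  exact Set.mem_iUnion.mpr ⟨k, hb⟩

lemma base_white (P : KRPartOn (XV VV)) {N : ℕ} (hbase : AgreeOn N P.base) :
    ∀ b ∈ P.base, ∀ u : ℤ, |u| ≤ (N : ℤ) → b u = true :=
  fun b hb u hu => hbase b hb _ (ones_in_base P) u hu

/-- **Capture lemma**: if `y(-1) = 0`, the column of the partition containing position `-1`
extends past position `e` whenever `e + 1 ≤ N` (no cut can occur within `N` of a zero). -/
lemma capture (P : KRPartOn (XV VV)) {N : ℕ} (hbase : AgreeOn N P.base)
    {y : ℤ → Bool} (hy : y ∈ XV VV) {e : ℕ} (heN : e + 1 ≤ N)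
    (hm1 : y (-1) = false) :
    ∃ (k : Fin P.d) (j : ℕ), j < P.h k ∧
      (∀ w : ℕ, w < P.h k → zsh y (-1 - (j : ℤ) + w) ∈ shift^[w] '' P.B k) ∧
      (e : ℤ) < -1 - (j : ℤ) + P.h k := by
  classical
  have hz : zsh y (-1) ∈
      (⋃ k, ⋃ j ∈ Finset.range (P.h k), shift^[j] '' P.B k) := by
    rw [P.cover]; exact zsh_memXV hy _
  simp only [Set.mem_iUnion, Finset.mem_range] at hz
  obtain ⟨k, j, hj, b, hb, hbe⟩ := hz
  have hbval : b = zsh y (-1 - (j : ℤ)) := by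
    funext i
    have h1 := congrFun hbe (i - j)
    rw [shift_iterate] at h1
    rw [show i - (j : ℤ) + j = i from by ring] at h1
    rw [h1]
    show y (i - (j:ℤ) + -1) = y (i + (-1 - j))
    congr 1
    ring
  refine ⟨k, j, hj, ?_, ?_⟩
  · intro w hw
    refine ⟨b, hb, ?_⟩
    funext i
    rw [shift_iterate, hbval]
    show y (i + w + (-1 - (j:ℤ))) = y (i + (-1 - j + w))
    congr 1
    ring
  · by_contra hcon
    push_neg at hcon
    have hjh : (j : ℤ) < (P.h k : ℤ) := by exact_mod_cast hj
    set t' : ℤ := -1 - (j : ℤ) + P.h k with ht'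
    have ht0 : 0 ≤ t' := by omega
    have htop : zsh y t' ∈ P.base := by
      have h1 : shift^[P.h k] b ∈ ⋃ k', shift^[P.h k'] '' P.B k' :=
        Set.mem_iUnion.mpr ⟨k, Set.mem_image_of_mem _ hb⟩
      rw [P.base_eq] at h1
      have h2 : shift^[P.h k] b = zsh y t' := by
        funext i
        rw [shift_iterate, hbval]
        show y (i + (P.h k : ℤ) + (-1 - j)) = y (i + t')
        congr 1
        omega
      rw [h2] at h1
      exact h1
    have hwhite := base_white P hbase _ htop (-1 - t') (by rw [abs_le]; omega)
    have : zsh y t' (-1 - t') = y (-1) := by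
      show y (-1 - t' + t') = y (-1)
      congr 1
      ring
    rw [this, hm1] at hwhite
    exact Bool.false_ne_true hwhite

/-- same-tower column word agreement -/
lemma column_agree (P : KRPartOn (XV VV)) {N : ℕ}
    (hlev : ∀ (k : Fin P.d) (j : ℕ), j < P.h k → AgreeOn N (shift^[j] '' P.B k))
    {k : Fin P.d} {z z' : ℤ → Bool} {w : ℕ} (hw : w < P.h k)
    (hz : z ∈ shift^[w] '' P.B k) (hz' : z' ∈ shift^[w] '' P.B k) : z 0 = z' 0 :=
  hlev k w hw z hz z' hz' 0 (by simp)

/-- **Core contradiction**: two junctions with distinct odd values captured by the same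
tower (hence the same column word) are impossible. -/
lemma coreContra {h N H M M' : ℕ} {t₀ t₀' : ℤ}
    (hhH : h ≤ H)
    (hLM : 2 * H + 2 * N + 9 ≤ LL M) (hLM' : 2 * H + 2 * N + 9 ≤ LL M')
    (hcc : cc M ≠ cc M')
    (ht1 : t₀ ≤ -1) (ht1' : t₀' ≤ -1)
    (ht2 : -(h : ℤ) ≤ t₀) (ht2' : -(h : ℤ) ≤ t₀')
    (hrb : (cc M : ℤ) < t₀ + h) (hrb' : (cc M' : ℤ) < t₀' + h)
    (hord : t₀' ≤ t₀)
    (hAg : ∀ w : ℕ, w < h → yPt M (t₀ + w) = yPt M' (t₀' + w)) : False := by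
  have hccM := cc_pos M
  have hccM' := cc_pos M'
  obtain ⟨p, hp⟩ : ∃ p : ℕ, (p : ℤ) = -t₀ := ⟨(-t₀).toNat, by omega⟩
  obtain ⟨p', hp'⟩ : ∃ p' : ℕ, (p' : ℤ) = -t₀' := ⟨(-t₀').toNat, by omega⟩
  have hp1 : 1 ≤ p := by omega
  have hpe : p + cc M < h := by omega
  have hpe' : p' + cc M' < h := by omega
  have hple : p ≤ p' := by omega
  rcases Nat.eq_or_lt_of_le hple with hpp | hpp
  · -- same offset: run lengths must agree
    rcases Nat.lt_or_ge (cc M) (cc M') with hlt | hge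
    · have h1 := hAg (p + cc M) (by omega)
      rw [show t₀ + ((p + cc M : ℕ) : ℤ) = ((cc M : ℕ) : ℤ) from by omega] at h1
      rw [show t₀' + ((p + cc M : ℕ) : ℤ) = ((cc M : ℕ) : ℤ) from by omega] at h1
      rw [yPt_cc M, yPt_run M' hlt] at h1
      exact Bool.false_ne_true h1
    · have hgt : cc M' < cc M := by omega
      have h1 := hAg (p + cc M') (by omega)
      rw [show t₀ + ((p + cc M' : ℕ) : ℤ) = ((cc M' : ℕ) : ℤ) from by omega] at h1
      rw [show t₀' + ((p + cc M' : ℕ) : ℤ) = ((cc M' : ℕ) : ℤ) from by omega] at h1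
      rw [yPt_run M hgt, yPt_cc M'] at h1
      simp at h1
  · -- p < p' : the `M`-junction is seen strictly inside `v_{M'}`
    have hsep : p + cc M < p' := by
      by_contra hcon
      push_neg at hcon
      obtain ⟨u, hu⟩ : ∃ u : ℕ, p' - 1 = p + u := ⟨p' - 1 - p, by omega⟩
      have hu2 : u < cc M := by omega
      have h1 := hAg (p + u) (by omega)
      rw [show t₀ + ((p + u : ℕ) : ℤ) = ((u : ℕ) : ℤ) from by omega] at h1
      rw [show t₀' + ((p + u : ℕ) : ℤ) = (-1 : ℤ) from by omega] at h1
      rw [yPt_run M hu2, yPt_neg1 M'] at h1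
      simp at h1
    obtain ⟨qn, hqn⟩ : ∃ qn : ℕ, (qn : ℤ) = LL M' + t₀' + p :=
      ⟨(LL M' + t₀' + p).toNat, by omega⟩
    have hq1 : 1 ≤ qn := by omega
    have hv1 : VV (qn - 1) = false := by
      have h1 := hAg (p - 1) (by omega)
      rw [show t₀ + ((p - 1 : ℕ) : ℤ) = (-1 : ℤ) from by omega] at h1
      rw [yPt_neg1 M] at h1
      rw [yPt_val M' (by omega)] at h1
      rw [show (t₀' + ((p - 1 : ℕ) : ℤ) + LL M').toNat = qn - 1 from by omega] at h1
      exact h1.symm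
    have hv2 : ∀ i, i < cc M → VV (qn + i) = true := by
      intro i hi
      have h1 := hAg (p + i) (by omega)
      rw [show t₀ + ((p + i : ℕ) : ℤ) = ((i : ℕ) : ℤ) from by omega] at h1
      rw [yPt_run M hi] at h1
      rw [yPt_val M' (by omega)] at h1
      rw [show (t₀' + ((p + i : ℕ) : ℤ) + LL M').toNat = qn + i from by omega] at h1
      exact h1.symm
    have hv3 : VV (qn + cc M) = false := by
      have h1 := hAg (p + cc M) (by omega)
      rw [show t₀ + ((p + cc M : ℕ) : ℤ) = ((cc M : ℕ) : ℤ) from by omega] at h1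
      rw [yPt_cc M] at h1
      rw [yPt_val M' (by omega)] at h1
      rw [show (t₀' + ((p + cc M : ℕ) : ℤ) + LL M').toNat = qn + cc M from by omega] at h1
      exact h1.symm
    have hbound : qn + cc M < LL M' := by omega
    obtain ⟨ℓ, hl1, hl2, hl3, hl4⟩ := lemJ M' qn (cc M) (cc_odd M) hq1 hbound hv1 hv2 hv3
    have hwlt : p + cc M + ℓ + cc M < p' := by omega
    have h1 := hAg (p + cc M + ℓ + cc M) (by omega)
    rw [show t₀ + ((p + cc M + ℓ + cc M : ℕ) : ℤ) = (cc M : ℤ) + ((ℓ + cc M : ℕ) : ℤ) from by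
      omega] at h1
    rw [yPt_after M (show ℓ + cc M < LL M from by omega)] at h1
    rw [hl2] at h1
    rw [yPt_val M' (by omega)] at h1
    rw [show (t₀' + ((p + cc M + ℓ + cc M : ℕ) : ℤ) + LL M').toNat = qn + cc M + ℓ + cc M from by
      omega] at h1
    rw [hl3] at h1
    exact Bool.false_ne_true h1

/-- `(X_V, σ)` does not have topological rank at most `m`, for any `m`. -/
lemma notTopRank (m : ℕ) : ¬ TopRankLE (XV VV) m := by
  rintro ⟨x, hxX, hN⟩
  obtain ⟨P, hPd, hlev, hbase, -⟩ := hN (2 * m + 2)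
  set N := 2 * m + 2 with hNdef
  set H := (Finset.univ.sup P.h) + 1 with hHdef
  have hhH : ∀ k, P.h k ≤ H := fun k =>
    le_trans (Finset.le_sup (Finset.mem_univ k)) (by omega)
  set T := 2 * H + 2 * N + 9 with hTdef
  have hccM : ∀ i : Fin (m + 1), cc (Nat.pair i T) = 2 * (i : ℕ) + 1 := fun i => by
    simp [cc, Nat.unpair_pair]
  have hLM : ∀ i : Fin (m + 1), T ≤ LL (Nat.pair i T) := fun i => by
    have h1 := Nat.right_le_pair (i : ℕ) T
    have h2 := LL_ge (Nat.pair i T)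
    omega
  have hcap : ∀ i : Fin (m + 1), ∃ (k : Fin P.d) (j : ℕ), j < P.h k ∧
      (∀ w : ℕ, w < P.h k →
        zsh (yPt (Nat.pair i T)) (-1 - (j : ℤ) + w) ∈ shift^[w] '' P.B k) ∧
      ((cc (Nat.pair i T) : ℤ)) < -1 - (j : ℤ) + P.h k := by
    intro i
    refine capture P hbase (yPt_mem _) ?_ (yPt_neg1 _)
    · rw [hccM i]
      have := i.isLt
      omega
  choose k j hj hlevmem htop using hcap
  have hcard : Fintype.card (Fin P.d) < Fintype.card (Fin (m + 1)) := by
    simpa using lt_of_le_of_lt hPd (show m < m + 1 by omega)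
  obtain ⟨i, i', hne, hk⟩ := Fintype.exists_ne_map_eq_of_card_lt k hcard
  -- common tower data
  have hhk : P.h (k i) = P.h (k i') := by rw [hk]
  set t₀ := (-1 : ℤ) - j i with ht₀
  set t₀' := (-1 : ℤ) - j i' with ht₀'
  have hAg : ∀ w : ℕ, w < P.h (k i) →
      yPt (Nat.pair i T) (t₀ + w) = yPt (Nat.pair i' T) (t₀' + w) := by
    intro w hw
    have h1 := hlevmem i w hw
    have h2 := hlevmem i' w (by rw [← hhk]; exact hw)
    rw [← hk] at h2
    have h3 := column_agree P hlev hw h1 h2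
    simpa [zsh] using h3
  have hcc : cc (Nat.pair i T) ≠ cc (Nat.pair i' T) := by
    rw [hccM i, hccM i']
    intro hcon
    exact hne (Fin.ext (by omega))
  -- numeric facts
  have hji := hj i
  have hji' : j i' < P.h (k i) := by rw [hhk]; exact hj i'
  have hLi : 2 * H + 2 * N + 9 ≤ LL (Nat.pair i T) := hLM i
  have hLi' : 2 * H + 2 * N + 9 ≤ LL (Nat.pair i' T) := hLM i'
  have hHi : P.h (k i) ≤ H := hhH (k i)
  have htopi : (cc (Nat.pair i T) : ℤ) < t₀ + P.h (k i) := htop i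
  have htopi' : (cc (Nat.pair i' T) : ℤ) < t₀' + P.h (k i) := by
    rw [hhk]; exact htop i'
  rcases le_total t₀' t₀ with hord | hord
  · exact coreContra hHi hLi hLi' hcc (by omega) (by omega)
      (by omega) (by omega) htopi htopi' hord hAg
  · exact coreContra hHi hLi' hLi (fun hcon => hcc hcon.symm) (by omega) (by omega)
      (by omega) (by omega) htopi' htopi hord
      (fun w hw => (hAg w hw).symm)

/-! ### Non-minimality -/

lemma nonminimal : ¬ (∀ x ∈ XV VV, XV VV ⊆ closure (sorbit x)) := by
  intro hall
  have h1 := hall (fun _ => true) ones_mem (yPt_mem 0)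
  have h2 : sorbit (fun _ : ℤ => true) = {fun _ : ℤ => true} := by
    apply Set.eq_singleton_iff_unique_mem.mpr
    refine ⟨⟨0, rfl⟩, ?_⟩
    rintro y ⟨n, rfl⟩
    rfl
  rw [h2, IsClosed.closure_eq isClosed_singleton] at h1
  have h3 := congrFun (Set.mem_singleton_iff.mp h1) (-1)
  rw [yPt_neg1 0] at h3
  simp at h3

/-! ### The rank-one construction -/

lemma vW_cons (n : ℕ) : ∃ t, vW n = false :: t := by
  induction n with
  | zero => exact ⟨[], rfl⟩
  | succ n ih =>
    obtain ⟨t, ht⟩ := ih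
    exact ⟨t ++ (List.replicate (cc n) true ++ (vW n ++ (List.replicate (ss n) true ++ vW n))),
      by rw [vW_succ, ht]; simp⟩

lemma vW_concat (n : ℕ) : ∃ t, vW n = t ++ [false] := by
  induction n with
  | zero => exact ⟨[], rfl⟩
  | succ n ih =>
    obtain ⟨t, ht⟩ := ih
    refine ⟨vW n ++ (List.replicate (cc n) true ++ (vW n ++ (List.replicate (ss n) true ++ t))),
      ?_⟩
    rw [vW_succ]
    nth_rewrite 3 [ht]
    simp [List.append_assoc]

lemma vW_mem_FF (n : ℕ) : vW n ∈ FF := by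
  obtain ⟨t, ht⟩ := vW_cons n
  obtain ⟨t', ht'⟩ := vW_concat n
  refine ⟨by rw [ht]; simp, by rw [ht]; simp, by rw [ht']; simp⟩

/-- the explicit rank-1 construction of `V` -/
noncomputable def theConstr : RankConstruction 1 where
  ni := fun _ => 1
  wd := fun i _ => vW i
  bld := fun i _ => ⟨[(vW i, cc i), (vW i, ss i)], vW i⟩
  ni_pos := fun _ => le_refl 1
  ni_le := fun _ => le_refl 1
  mem_FF := fun i _ _ _ => vW_mem_FF i
  wd_zero := fun _ _ _ => rfl
  bld_from := by
    intro i jj _ _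
    constructor
    · simp
    · intro v hv
      simp only [Building.pieces, List.map_cons, List.map_nil, List.mem_append,
        List.mem_cons, List.mem_singleton, List.not_mem_nil] at hv
      refine ⟨1, le_rfl, le_rfl, ?_⟩
      rcases hv with (h | h | h) | h <;> simp_all
  bld_word := by
    intro i jj _ _
    show vW i ++ spacer (cc i) ++ (vW i ++ spacer (ss i) ++ vW i) = vW (i+1)
    rw [vW_succ]
    simp [spacer, List.append_assoc]
  bld_start := fun i => rfl

lemma hasRank : HasRankConstr VV 1 := by
  refine ⟨theConstr, fun i => ?_, fun m => ⟨m, ?_⟩⟩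
  · intro k hk
    exact (VV_eq_vW hk).symm
  · show m ≤ (vW m).length
    have := LL_ge m
    rw [LL] at this
    omega

/-- Proposition 6.10. There is a rank-1 word `V` such that `X_V` is not
minimal and `(X_V, σ)` does not have finite topological rank. -/
theorem statement_14 :
    ∃ V : ℕ → Bool, HasRankConstr V 1 ∧
      ¬ (∀ x ∈ XV V, XV V ⊆ closure (sorbit x)) ∧
      ∀ m : ℕ, 1 ≤ m → ¬ TopRankLE (XV V) m :=
  ⟨VV, hasRank, nonminimal, fun m _ => notTopRank m⟩

end SubshiftRank
end
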